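/- arXiv:2412.04825 — 4 statements merged into one kernel-verified Lean document; each statement's English description precedes it below -/
import Mathlib

section
/- Let n ≥ 2, 1 ≤ k ≤ n−1, and let p, q be distinct qubit indices. Let R̃_{pq} be the restriction to the Hamming-weight-k subspace H_{n,k} of the operator R_{pq}. Then Tr(R̃_{pq}) = 0 and Tr(R̃_{pq}²) = 2·C(n−2, k−1) = (2k(n−k)/(n(n−1))) · C(n, k). -/
open Matrix Complex

noncomputable section

/-- Computational basis labels for `n` qubits: bit strings of length `n`. -/
abbrev QState (n : ℕ) := Fin n → Fin 2

/-- Operators on the `n`-qubit Hilbert space `(ℂ²)^⊗n`, as matrices in the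
computational basis. -/
abbrev QOp (n : ℕ) := Matrix (QState n) (QState n) ℂ

/-- Flip the bit at position `m` of a basis label. -/
def flipBit {n : ℕ} (m : Fin n) (b : QState n) : QState n :=
  Function.update b m (1 - b m)

/-- The Pauli `X` operator acting on qubit `m` (identity elsewhere). -/
def pauliX {n : ℕ} (m : Fin n) : QOp n :=
  Matrix.of fun b b' => if b = flipBit m b' then 1 else 0

/-- The Pauli `Y` operator acting on qubit `m` (identity elsewhere):
`Y|0⟩ = i|1⟩`, `Y|1⟩ = -i|0⟩`. -/
def pauliY {n : ℕ} (m : Fin n) : QOp n :=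
  Matrix.of fun b b' =>
    if b = flipBit m b' then (if b' m = 0 then Complex.I else -Complex.I) else 0

/-- The Pauli `Z` operator acting on qubit `m` (identity elsewhere). -/
def pauliZ {n : ℕ} (m : Fin n) : QOp n :=
  Matrix.of fun b b' => if b = b' then (if b m = 0 then 1 else -1) else 0

/-- `R_{pq} = (X_p X_q + Y_p Y_q)/2`. -/
def opR {n : ℕ} (p q : Fin n) : QOp n :=
  (1/2 : ℂ) • (pauliX p * pauliX q + pauliY p * pauliY q)

/-- `J_{pq} = (X_p Y_q − Y_p X_q)/2`. -/
def opJ {n : ℕ} (p q : Fin n) : QOp n :=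
  (1/2 : ℂ) • (pauliX p * pauliY q - pauliY p * pauliX q)

/-- `E_{pq} = (I − Z_p Z_q)/2`. -/
def opE {n : ℕ} (p q : Fin n) : QOp n :=
  (1/2 : ℂ) • ((1 : QOp n) - pauliZ p * pauliZ q)

/-- `S_{pq} = (Z_p − Z_q)/2`. -/
def opS {n : ℕ} (p q : Fin n) : QOp n :=
  (1/2 : ℂ) • (pauliZ p - pauliZ q)

/-- Hamming weight of a basis label. -/
def wt {n : ℕ} (b : QState n) : ℕ := ∑ i, (b i : ℕ)

/-- Basis labels of the Hamming-weight-`k` subspace `H_{n,k}`. -/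
abbrev HWBasis (n k : ℕ) := {b : QState n // wt b = k}

/-- Restriction (compression) of an `n`-qubit operator to the Hamming-weight-`k`
subspace; for Hamming-weight-preserving operators this is the restriction. -/
def restrict {n : ℕ} (k : ℕ) (M : QOp n) : Matrix (HWBasis n k) (HWBasis n k) ℂ :=
  Matrix.of fun x y => M x.1 y.1

attribute [local instance 100] LieRing.ofAssociativeRing

/-- The dynamical Lie algebra generated by a set `G` of (Hermitian) operators:
the real Lie algebra generated by `{i·H : H ∈ G}` under commutators and real
linear combinations. -/
def DLA {ι : Type*} [Fintype ι] [DecidableEq ι] (G : Set (Matrix ι ι ℂ)) :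
    LieSubalgebra ℝ (Matrix ι ι ℂ) :=
  LieSubalgebra.lieSpan ℝ _ ((fun H => Complex.I • H) '' G)

/-- The real dimension of the dynamical Lie algebra generated by `G`. -/
def dlaDim {ι : Type*} [Fintype ι] [DecidableEq ι] (G : Set (Matrix ι ι ℂ)) : ℕ :=
  Module.finrank ℝ ↥(DLA G)

/-- The cyclic successor `p + 1 (mod n)` of a qubit index. -/
def cyc {n : ℕ} (p : Fin n) : Fin n :=
  ⟨(p.1 + 1) % n, Nat.mod_lt _ (Nat.lt_of_le_of_lt (Nat.zero_le _) p.2)⟩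


-- auxiliary lemmas (to be placed above the theorem)
lemma flipBit_apply_self {n : ℕ} (m : Fin n) (b : QState n) :
    flipBit m b m = 1 - b m := by simp [flipBit]

lemma flipBit_apply_ne {n : ℕ} {m i : Fin n} (h : i ≠ m) (b : QState n) :
    flipBit m b i = b i := by simp [flipBit, Function.update_of_ne h]

lemma fin2_sub_ne (x : Fin 2) : 1 - x ≠ x := by revert x; decide

lemma fin2_sub_sub (x : Fin 2) : 1 - (1 - x) = x := by revert x; decide

lemma fin2_ne_iff {a c : Fin 2} : a ≠ c ↔ c = 1 - a := by revert a c; decide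

lemma fin2_val_add_sub (a : Fin 2) : (a : ℕ) + ((1 - a : Fin 2) : ℕ) = 1 := by
  revert a; decide

lemma fin2_sub_ne_sub {a c : Fin 2} (h : a ≠ c) : 1 - a ≠ 1 - c := by
  revert a c; decide

lemma opR_apply {n : ℕ} (p q : Fin n) (hpq : p ≠ q) (b b' : QState n) :
    opR p q b b' = if b = flipBit p (flipBit q b') ∧ b' p ≠ b' q then 1 else 0 := by
  have hXX : (pauliX p * pauliX q) b b' = if b = flipBit p (flipBit q b') then 1 else 0 := by
    simp [Matrix.mul_apply, pauliX, ite_and]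
  have hYY : (pauliY p * pauliY q) b b' =
      if b = flipBit p (flipBit q b') then
        ((if (flipBit q b') p = 0 then Complex.I else -Complex.I) *
         (if b' q = 0 then Complex.I else -Complex.I)) else 0 := by
    simp [Matrix.mul_apply, pauliY, ite_and, mul_comm]
  rw [opR]
  simp only [Matrix.smul_apply, Matrix.add_apply, hXX, hYY]
  rw [flipBit_apply_ne hpq]
  rcases (show b' p = 0 ∨ b' p = 1 by omega) with h1 | h1 <;>
    rcases (show b' q = 0 ∨ b' q = 1 by omega) with h2 | h2 <;>
    simp [h1, h2, Complex.I_mul_I] <;> split <;> norm_num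

lemma card_filter_one {α : Type*} [Fintype α] [DecidableEq α] (f : α → Fin 2) :
    (Finset.univ.filter (fun i => f i = 1)).card = ∑ i, ((f i : ℕ)) := by
  rw [Finset.card_filter]
  apply Finset.sum_congr rfl
  intro i _
  rcases (show f i = 0 ∨ f i = 1 by omega) with h | h <;> simp [h]

lemma card_wt_eq (α : Type*) [Fintype α] [DecidableEq α] (k : ℕ) :
    Fintype.card {f : α → Fin 2 // ∑ i, ((f i : ℕ)) = k} = (Fintype.card α).choose k := by
  rw [← Fintype.card_finset_len]
  apply Fintype.card_congr
  refine ⟨fun f => ⟨Finset.univ.filter (fun i => f.1 i = 1), by rw [card_filter_one]; exact f.2⟩,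
         fun s => ⟨fun i => if i ∈ s.1 then 1 else 0, ?_⟩, ?_, ?_⟩
  · calc ∑ i, (((if i ∈ s.1 then (1:Fin 2) else 0) : Fin 2) : ℕ)
        = ∑ i, (if i ∈ s.1 then (1:ℕ) else 0) := by
          exact Finset.sum_congr rfl (fun i _ => by split <;> simp)
      _ = s.1.card := by
          rw [Finset.sum_ite_mem, Finset.univ_inter, ← Finset.card_eq_sum_ones]
      _ = k := s.2
  · intro f
    ext i
    rcases (show f.1 i = 0 ∨ f.1 i = 1 by omega) with h | h <;> simp [h]
  · intro s
    ext i
    simp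

lemma wt_split {n : ℕ} (p q : Fin n) (hpq : p ≠ q) (b : QState n) :
    wt b = (b p : ℕ) + (b q : ℕ) + ∑ i : {i : Fin n // i ≠ p ∧ i ≠ q}, (b i.1 : ℕ) := by
  have hsub : ∑ i : {i : Fin n // i ≠ p ∧ i ≠ q}, (b i.1 : ℕ)
      = ∑ i ∈ (Finset.univ.erase p).erase q, (b i : ℕ) := by
    refine (Finset.sum_subtype _ (fun i => ?_) (fun i => (b i : ℕ))).symm
    simp [and_comm, eq_comm]
  rw [hsub, wt, ← Finset.add_sum_erase _ _ (Finset.mem_univ p),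
    ← Finset.add_sum_erase _ _ (Finset.mem_erase.mpr ⟨Ne.symm hpq, Finset.mem_univ q⟩)]
  ring

def invAux {n : ℕ} (p q : Fin n) (x : Fin 2)
    (f : {i : Fin n // i ≠ p ∧ i ≠ q} → Fin 2) : QState n :=
  fun i => if h : i = p then x else if h' : i = q then 1 - x else f ⟨i, h, h'⟩

lemma invAux_p {n : ℕ} (p q : Fin n) (x : Fin 2) (f : {i : Fin n // i ≠ p ∧ i ≠ q} → Fin 2) :
    invAux p q x f p = x := by simp [invAux]

lemma invAux_q {n : ℕ} (p q : Fin n) (hpq : p ≠ q) (x : Fin 2)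
    (f : {i : Fin n // i ≠ p ∧ i ≠ q} → Fin 2) :
    invAux p q x f q = 1 - x := by simp [invAux, Ne.symm hpq]

lemma invAux_other {n : ℕ} (p q : Fin n) (x : Fin 2)
    (f : {i : Fin n // i ≠ p ∧ i ≠ q} → Fin 2) (i : Fin n) (h1 : i ≠ p) (h2 : i ≠ q) :
    invAux p q x f i = f ⟨i, h1, h2⟩ := by simp [invAux, h1, h2]

lemma card_index_ne {n : ℕ} (hn : 2 ≤ n) (p q : Fin n) (hpq : p ≠ q) :
    Fintype.card {i : Fin n // i ≠ p ∧ i ≠ q} = n - 2 := by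
  rw [Fintype.card_subtype]
  have h1 : Finset.univ.filter (fun i => i ≠ p ∧ i ≠ q) = ({p, q} : Finset (Fin n))ᶜ := by
    ext i; simp [not_or]
  rw [h1, Finset.card_compl, Finset.card_pair hpq, Fintype.card_fin]

lemma count_ne (n k : ℕ) (hn : 2 ≤ n) (hk1 : 1 ≤ k) (p q : Fin n) (hpq : p ≠ q) :
    Fintype.card {b : QState n // wt b = k ∧ b p ≠ b q} = 2 * (n - 2).choose (k - 1) := by
  have E : {b : QState n // wt b = k ∧ b p ≠ b q} ≃
      Fin 2 × {f : {i : Fin n // i ≠ p ∧ i ≠ q} → Fin 2 // ∑ i, ((f i : ℕ)) = k - 1} := by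
    refine ⟨fun b => (b.1 p, ⟨fun i => b.1 i.1, ?_⟩),
           fun x => ⟨invAux p q x.1 x.2.1, ?_, ?_⟩, ?_, ?_⟩
    · have hs := wt_split p q hpq b.1
      have h1 : (b.1 p : ℕ) + (b.1 q : ℕ) = 1 := by
        have h0 := b.2.2
        have h2 : (b.1 p : ℕ) ≠ (b.1 q : ℕ) := fun h => h0 (Fin.val_injective h)
        have := (b.1 p).2; have := (b.1 q).2
        omega
      have hw := b.2.1
      rw [hs] at hw
      show ∑ i : {i : Fin n // i ≠ p ∧ i ≠ q}, ((b.1 i.1 : ℕ)) = k - 1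
      omega
    · have hs := wt_split p q hpq (invAux p q x.1 x.2.1)
      rw [invAux_p, invAux_q p q hpq] at hs
      have h2 : ∑ i : {i : Fin n // i ≠ p ∧ i ≠ q}, ((invAux p q x.1 x.2.1 i.1 : ℕ))
          = ∑ i, ((x.2.1 i : ℕ)) := by
        refine Finset.sum_congr rfl (fun i _ => ?_)
        rw [invAux_other p q x.1 x.2.1 i.1 i.2.1 i.2.2]
      rw [hs, h2, fin2_val_add_sub, x.2.2]
      omega
    · rw [invAux_p, invAux_q p q hpq]
      exact fun h => fin2_sub_ne x.1 h.symm
    · intro b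
      apply Subtype.ext
      funext i
      show invAux p q (b.1 p) (fun j => b.1 j.1) i = b.1 i
      by_cases h : i = p
      · rw [h]; exact invAux_p _ _ _ _
      · by_cases h' : i = q
        · rw [h', invAux_q p q hpq]
          exact (fin2_ne_iff.mp b.2.2).symm
        · exact invAux_other p q _ _ i h h'
    · intro x
      show ((invAux p q x.1 x.2.1 p, _) : Fin 2 × _) = x
      refine Prod.ext (invAux_p _ _ _ _) (Subtype.ext ?_)
      funext i
      show invAux p q x.1 x.2.1 i.1 = x.2.1 i
      exact invAux_other p q _ _ i.1 i.2.1 i.2.2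
  rw [Fintype.card_congr E, Fintype.card_prod, Fintype.card_fin,
    card_wt_eq, card_index_ne hn p q hpq]

lemma nat_identity (n k : ℕ) (hn : 2 ≤ n) (hk1 : 1 ≤ k) (hk2 : k ≤ n - 1) :
    n * (n - 1) * (n - 2).choose (k - 1) = k * (n - k) * n.choose k := by
  obtain ⟨m, rfl⟩ : ∃ m, n = m + 2 := ⟨n - 2, by omega⟩
  obtain ⟨j, rfl⟩ : ∃ j, k = j + 1 := ⟨k - 1, by omega⟩
  have hj : j ≤ m := by omega
  have e1 : (m + 2) * (m + 1).choose j = (m + 2).choose (j + 1) * (j + 1) :=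
    Nat.add_one_mul_choose_eq (m + 1) j
  have e2 : (m + 1).choose (j + 1) * (j + 1) = (m + 1).choose j * (m + 1 - j) :=
    Nat.choose_succ_right_eq (m + 1) j
  have e3 : (m + 1) * m.choose j = (m + 1).choose (j + 1) * (j + 1) :=
    Nat.add_one_mul_choose_eq m j
  have hs : (m + 2) - (j + 1) = m + 1 - j := by omega
  calc (m + 2) * ((m + 2) - 1) * (m + 2 - 2).choose (j + 1 - 1)
      = (m + 2) * ((m + 1) * m.choose j) := by
        have h1 : m + 2 - 1 = m + 1 := by omega
        have h2 : m + 2 - 2 = m := by omega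
        have h3 : j + 1 - 1 = j := by omega
        rw [h1, h2, h3]; ring
    _ = (m + 2) * ((m + 1).choose (j + 1) * (j + 1)) := by rw [e3]
    _ = (m + 2) * ((m + 1).choose j * (m + 1 - j)) := by rw [e2]
    _ = ((m + 2) * (m + 1).choose j) * (m + 1 - j) := by ring
    _ = ((m + 2).choose (j + 1) * (j + 1)) * (m + 1 - j) := by rw [e1]
    _ = (j + 1) * ((m + 2) - (j + 1)) * (m + 2).choose (j + 1) := by rw [hs]; ring

lemma flip2_flip2 {n : ℕ} (p q : Fin n) (hpq : p ≠ q) (b : QState n) :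
    flipBit p (flipBit q (flipBit p (flipBit q b))) = b := by
  funext i
  by_cases h : i = p
  · subst h
    rw [flipBit_apply_self, flipBit_apply_ne hpq, flipBit_apply_self,
      flipBit_apply_ne hpq, fin2_sub_sub]
  · by_cases h' : i = q
    · subst h'
      rw [flipBit_apply_ne h, flipBit_apply_self, flipBit_apply_ne h,
        flipBit_apply_self, fin2_sub_sub]
    · rw [flipBit_apply_ne h, flipBit_apply_ne h', flipBit_apply_ne h, flipBit_apply_ne h']

lemma flip2_p {n : ℕ} (p q : Fin n) (hpq : p ≠ q) (b : QState n) :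
    flipBit p (flipBit q b) p = 1 - b p := by
  rw [flipBit_apply_self, flipBit_apply_ne hpq]

lemma flip2_q {n : ℕ} (p q : Fin n) (hpq : p ≠ q) (b : QState n) :
    flipBit p (flipBit q b) q = 1 - b q := by
  rw [flipBit_apply_ne (Ne.symm hpq), flipBit_apply_self]

lemma wt_flip2 {n : ℕ} (p q : Fin n) (hpq : p ≠ q) (b : QState n) (hb : b p ≠ b q) :
    wt (flipBit p (flipBit q b)) = wt b := by
  rw [wt_split p q hpq b, wt_split p q hpq (flipBit p (flipBit q b))]
  have h1 : ∑ i : {i : Fin n // i ≠ p ∧ i ≠ q}, ((flipBit p (flipBit q b) i.1 : ℕ))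
      = ∑ i : {i : Fin n // i ≠ p ∧ i ≠ q}, ((b i.1 : ℕ)) := by
    refine Finset.sum_congr rfl (fun i _ => ?_)
    rw [flipBit_apply_ne i.2.1, flipBit_apply_ne i.2.2]
  rw [h1, flip2_p p q hpq, flip2_q p q hpq]
  have : ((1 - b p : Fin 2) : ℕ) + ((1 - b q : Fin 2) : ℕ) = (b p : ℕ) + (b q : ℕ) := by
    revert hb; generalize b p = a; generalize b q = c; revert a c; decide
  omega


/-- Traces of the restriction of `R_{pq}` to the Hamming-weight-`k` subspace:
`Tr(R̃_{pq}) = 0` and `Tr(R̃_{pq}²) = 2·C(n−2,k−1) = (2k(n−k)/(n(n−1)))·C(n,k)`. -/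
theorem trace_restrict_opR (n k : ℕ) (hn : 2 ≤ n) (hk1 : 1 ≤ k) (hk2 : k ≤ n - 1)
    (p q : Fin n) (hpq : p ≠ q) :
    Matrix.trace (restrict k (opR p q)) = 0 ∧
    Matrix.trace (restrict k (opR p q) * restrict k (opR p q)) =
      2 * (((n - 2).choose (k - 1) : ℕ) : ℂ) ∧
    Matrix.trace (restrict k (opR p q) * restrict k (opR p q)) =
      2 * (k : ℂ) * ((n : ℂ) - (k : ℂ)) / ((n : ℂ) * ((n : ℂ) - 1)) * ((n.choose k : ℕ) : ℂ) := by
  have part1 : Matrix.trace (restrict k (opR p q)) = 0 := by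
    rw [Matrix.trace]
    apply Finset.sum_eq_zero
    intro x _
    show opR p q x.1 x.1 = 0
    rw [opR_apply p q hpq, if_neg]
    rintro ⟨h1, -⟩
    have h2 := congrFun h1 p
    rw [flip2_p p q hpq] at h2
    exact fin2_sub_ne _ h2.symm
  have hterm : ∀ x y : HWBasis n k,
      restrict k (opR p q) x y * restrict k (opR p q) y x =
        if y.1 = flipBit p (flipBit q x.1) ∧ x.1 p ≠ x.1 q then 1 else 0 := by
    intro x y
    show opR p q x.1 y.1 * opR p q y.1 x.1 = _
    rw [opR_apply p q hpq, opR_apply p q hpq]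
    have hAB : (x.1 = flipBit p (flipBit q y.1) ∧ y.1 p ≠ y.1 q) ↔
        (y.1 = flipBit p (flipBit q x.1) ∧ x.1 p ≠ x.1 q) := by
      constructor
      · rintro ⟨h1, h2⟩
        have h3 : flipBit p (flipBit q x.1) = y.1 := by
          rw [h1]; exact flip2_flip2 p q hpq y.1
        refine ⟨h3.symm, ?_⟩
        rw [h1, flip2_p p q hpq, flip2_q p q hpq]
        exact fin2_sub_ne_sub h2
      · rintro ⟨h1, h2⟩
        have h3 : flipBit p (flipBit q y.1) = x.1 := by
          rw [h1]; exact flip2_flip2 p q hpq x.1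
        refine ⟨h3.symm, ?_⟩
        rw [h1, flip2_p p q hpq, flip2_q p q hpq]
        exact fin2_sub_ne_sub h2
    rw [if_congr hAB rfl rfl]
    split <;> simp
  have part2 : Matrix.trace (restrict k (opR p q) * restrict k (opR p q)) =
      2 * (((n - 2).choose (k - 1) : ℕ) : ℂ) := by
    have htr : Matrix.trace (restrict k (opR p q) * restrict k (opR p q)) =
        ∑ x : HWBasis n k, ∑ y : HWBasis n k,
          restrict k (opR p q) x y * restrict k (opR p q) y x := by
      rw [Matrix.trace]
      exact Finset.sum_congr rfl (fun x _ => by rw [Matrix.diag_apply, Matrix.mul_apply])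
    have hinner : ∀ x : HWBasis n k,
        (∑ y : HWBasis n k,
          if y.1 = flipBit p (flipBit q x.1) ∧ x.1 p ≠ x.1 q then (1:ℂ) else 0) =
        if x.1 p ≠ x.1 q then 1 else 0 := by
      intro x
      by_cases hC : x.1 p ≠ x.1 q
      · rw [if_pos hC]
        have hy0 : wt (flipBit p (flipBit q x.1)) = k := by
          rw [wt_flip2 p q hpq x.1 hC]; exact x.2
        have hcond : ∀ y : HWBasis n k,
            (y.1 = flipBit p (flipBit q x.1) ∧ x.1 p ≠ x.1 q) ↔
              y = (⟨flipBit p (flipBit q x.1), hy0⟩ : HWBasis n k) := by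
          intro y
          rw [Subtype.ext_iff]
          exact ⟨fun h => h.1, fun h => ⟨h, hC⟩⟩
        calc (∑ y : HWBasis n k,
              if y.1 = flipBit p (flipBit q x.1) ∧ x.1 p ≠ x.1 q then (1:ℂ) else 0)
            = ∑ y : HWBasis n k,
                if y = (⟨flipBit p (flipBit q x.1), hy0⟩ : HWBasis n k) then (1:ℂ) else 0 :=
              Finset.sum_congr rfl (fun y _ => if_congr (hcond y) rfl rfl)
          _ = 1 := by
              rw [Finset.sum_ite_eq' Finset.univ _ (fun _ => (1:ℂ)),
                if_pos (Finset.mem_univ _)]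
      · rw [if_neg hC]
        exact Finset.sum_eq_zero (fun y _ => if_neg (fun h => hC h.2))
    have hcount : (∑ x : HWBasis n k, if x.1 p ≠ x.1 q then (1:ℂ) else 0) =
        ((2 * (n - 2).choose (k - 1) : ℕ) : ℂ) := by
      rw [Finset.sum_boole]
      rw [← Fintype.card_subtype]
      have hE : {x : HWBasis n k // x.1 p ≠ x.1 q} ≃ {b : QState n // wt b = k ∧ b p ≠ b q} :=
        Equiv.subtypeSubtypeEquivSubtypeInter (fun b : QState n => wt b = k) (fun b => b p ≠ b q)
      rw [Fintype.card_congr hE, count_ne n k hn hk1 p q hpq]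
    rw [htr]
    calc (∑ x : HWBasis n k, ∑ y : HWBasis n k,
          restrict k (opR p q) x y * restrict k (opR p q) y x)
        = ∑ x : HWBasis n k, ∑ y : HWBasis n k,
            (if y.1 = flipBit p (flipBit q x.1) ∧ x.1 p ≠ x.1 q then (1:ℂ) else 0) :=
          Finset.sum_congr rfl (fun x _ => Finset.sum_congr rfl (fun y _ => hterm x y))
      _ = ∑ x : HWBasis n k, (if x.1 p ≠ x.1 q then (1:ℂ) else 0) :=
          Finset.sum_congr rfl (fun x _ => hinner x)
      _ = ((2 * (n - 2).choose (k - 1) : ℕ) : ℂ) := hcount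
      _ = 2 * (((n - 2).choose (k - 1) : ℕ) : ℂ) := by push_cast; ring
  refine ⟨part1, part2, ?_⟩
  rw [part2]
  have hn0 : (n : ℂ) ≠ 0 := by
    exact_mod_cast Nat.cast_ne_zero.mpr (by omega)
  have hn1 : (n : ℂ) - 1 ≠ 0 := by
    have : (n : ℂ) ≠ 1 := by exact_mod_cast (by omega : n ≠ 1)
    exact sub_ne_zero.mpr this
  have hc := congrArg (fun t : ℕ => (t : ℂ)) (nat_identity n k hn hk1 hk2)
  simp only [Nat.cast_mul] at hc
  rw [Nat.cast_sub (show 1 ≤ n by omega), Nat.cast_sub (show k ≤ n by omega)] at hc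
  push_cast at hc
  rw [div_mul_eq_mul_div, eq_div_iff (mul_ne_zero hn0 hn1)]
  linear_combination 2 * hc

end
end

section
/- Let n ≥ 3 and 1 ≤ k ≤ n−1, and set k' = min(k, n−k). The dynamical Lie algebra generated on the Hamming-weight-k subspace H_{n,k} by the generator set {Ẽ_{pq} : p, q ∈ {0,…,n−1}, p ≠ q} has real dimension: n if k' = 1; n(n−1)/2 if 1 < k' < n/2; and (n−1)(n−2)/2 if n is even and k = n/2. -/
open Matrix Complex

noncomputable section

attribute [local instance] LieRing.ofAssociativeRing

/-! ### Auxiliary machinery -/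

section Aux

open Finset

lemma fin2_eq_or (a : Fin 2) : a = 0 ∨ a = 1 := by
  simp only [Fin.ext_iff]; omega

lemma fin2_eq_iff (a b t : Fin 2) : (a = b) ↔ ((a = t) ↔ (b = t)) := by
  simp only [Fin.ext_iff]; omega

lemma fin2_val (a : Fin 2) : (a : ℕ) = if a = 1 then 1 else 0 := by
  simp only [Fin.ext_iff]; split <;> omega

/-- The indicator function on the weight-`k` subspace. -/
def vfun (n k : ℕ) (p q : Fin n) : HWBasis n k → ℝ :=
  fun b => if b.1 p = b.1 q then 0 else 1

lemma pauliZZ_apply {n : ℕ} (p q : Fin n) (b b' : QState n) :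
    (pauliZ p * pauliZ q) b b'
      = if b = b' then (if b p = 0 then 1 else -1) * (if b q = 0 then 1 else -1) else 0 := by
  rw [Matrix.mul_apply]
  rw [Finset.sum_eq_single b]
  · simp [pauliZ]
  · intro c _ hc
    simp [pauliZ, Ne.symm hc]
  · intro h
    exact absurd (Finset.mem_univ b) h

lemma restrict_opE {n k : ℕ} (p q : Fin n) :
    restrict k (opE p q) = Matrix.diagonal fun x => ((vfun n k p q x : ℝ) : ℂ) := by
  ext x y
  simp only [_root_.restrict, Matrix.of_apply, opE, Matrix.smul_apply, Matrix.sub_apply,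
    Matrix.one_apply, pauliZZ_apply, Matrix.diagonal_apply, vfun]
  by_cases h : x = y
  · subst h
    simp only [if_pos rfl, Subtype.ext_iff]
    rcases fin2_eq_or (x.1 p) with hp | hp <;> rcases fin2_eq_or (x.1 q) with hq | hq <;>
      simp [hp, hq] <;> norm_num
  · have h1 : x.1 ≠ y.1 := fun hh => h (Subtype.ext hh)
    simp [h1, h]

/-- ℝ-linear diagonal embedding. -/
def diagL (ι : Type*) [Fintype ι] [DecidableEq ι] : (ι → ℂ) →ₗ[ℝ] Matrix ι ι ℂ where
  toFun := Matrix.diagonal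
  map_add' := fun x y => by simp [Matrix.diagonal_add]
  map_smul' := fun r d => by simp [Matrix.diagonal_smul]

lemma span_lie_zero {ι : Type*} [Fintype ι] [DecidableEq ι] (s : Set (Matrix ι ι ℂ))
    (hs : ∀ M ∈ s, ∃ d, M = Matrix.diagonal d) :
    ∀ x ∈ Submodule.span ℝ s, ∀ y ∈ Submodule.span ℝ s, ⁅x, y⁆ = 0 := by
  have hle : Submodule.span ℝ s ≤ LinearMap.range (diagL ι) := by
    rw [Submodule.span_le]
    rintro M hM
    obtain ⟨d, rfl⟩ := hs M hM
    exact ⟨d, rfl⟩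
  have hdL : ∀ d : ι → ℂ, diagL ι d = Matrix.diagonal d := fun _ => rfl
  intro x hx y hy
  obtain ⟨dx, rfl⟩ := hle hx
  obtain ⟨dy, rfl⟩ := hle hy
  rw [hdL, hdL, Ring.lie_def, Matrix.diagonal_mul_diagonal, Matrix.diagonal_mul_diagonal]
  rw [sub_eq_zero]
  have : (fun i => dx i * dy i) = fun i => dy i * dx i := funext fun i => mul_comm _ _
  rw [this]

lemma dla_eq_span {ι : Type*} [Fintype ι] [DecidableEq ι] (G : Set (Matrix ι ι ℂ))
    (hdiag : ∀ M ∈ G, ∃ d, M = Matrix.diagonal d) :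
    dlaDim G = Module.finrank ℝ ↥(Submodule.span ℝ ((fun H => Complex.I • H) '' G)) := by
  set s := (fun H => Complex.I • H) '' G with hs
  have hsd : ∀ M ∈ s, ∃ d, M = Matrix.diagonal d := by
    rintro M ⟨N, hN, rfl⟩
    obtain ⟨d, rfl⟩ := hdiag N hN
    exact ⟨Complex.I • d, (Matrix.diagonal_smul _ _).symm⟩
  have hz := span_lie_zero s hsd
  let K : LieSubalgebra ℝ (Matrix ι ι ℂ) :=
    { Submodule.span ℝ s with
      lie_mem' := fun {x y} hx hy => by
        have h0 : ⁅x, y⁆ = 0 := hz x hx y hy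
        rw [h0]; exact (Submodule.span ℝ s).zero_mem }
  have h1 : (DLA G).toSubmodule = Submodule.span ℝ s := by
    apply le_antisymm
    · have hK : DLA G ≤ K := LieSubalgebra.lieSpan_le.mpr Submodule.subset_span
      exact hK
    · exact LieSubalgebra.submodule_span_le_lieSpan
  have h2 : dlaDim G = Module.finrank ℝ ↥((DLA G).toSubmodule) := rfl
  rw [h2, h1]

/-- The embedding of real diagonal data into matrices, multiplied by `I`. -/
def Phi (n k : ℕ) : (HWBasis n k → ℝ) →ₗ[ℝ] Matrix (HWBasis n k) (HWBasis n k) ℂ where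
  toFun v := Matrix.diagonal fun x => Complex.I * (v x : ℂ)
  map_add' v w := by
    ext i j
    by_cases h : i = j <;> simp [Matrix.diagonal_apply, h] <;> ring
  map_smul' r v := by
    ext i j
    by_cases h : i = j <;> simp [Matrix.diagonal_apply, h, Complex.real_smul] <;> ring

lemma Phi_injective (n k : ℕ) : Function.Injective (Phi n k) := by
  intro v w h
  funext x
  have h2 := congrFun (congrFun h x) x
  simp only [Phi, LinearMap.coe_mk, AddHom.coe_mk, Matrix.diagonal_apply_eq] at h2
  have h3 : ((v x : ℝ) : ℂ) = ((w x : ℝ) : ℂ) := mul_left_cancel₀ Complex.I_ne_zero h2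
  exact_mod_cast h3

/-- Reduction of the DLA dimension to the dimension of a span of indicator vectors. -/
lemma dla_red (n k : ℕ) :
    dlaDim {M : Matrix (HWBasis n k) (HWBasis n k) ℂ |
        ∃ p q : Fin n, p ≠ q ∧ M = restrict k (opE p q)}
      = Module.finrank ℝ ↥(Submodule.span ℝ
          {v : HWBasis n k → ℝ | ∃ p q : Fin n, p ≠ q ∧ v = vfun n k p q}) := by
  rw [dla_eq_span _ (by rintro M ⟨p, q, hpq, rfl⟩; exact ⟨_, restrict_opE p q⟩)]
  have himg : (fun H => Complex.I • H) ''
      {M : Matrix (HWBasis n k) (HWBasis n k) ℂ |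
        ∃ p q : Fin n, p ≠ q ∧ M = restrict k (opE p q)}
      = Phi n k '' {v : HWBasis n k → ℝ | ∃ p q : Fin n, p ≠ q ∧ v = vfun n k p q} := by
    have hPhi : ∀ p q : Fin n, Complex.I • restrict k (opE p q) = Phi n k (vfun n k p q) := by
      intro p q
      rw [restrict_opE]
      ext x y
      by_cases h : x = y <;>
        simp [Phi, Matrix.diagonal_apply, h]
    ext M
    simp only [Set.mem_image, Set.mem_setOf_eq]
    constructor
    · rintro ⟨N, ⟨p, q, hpq, rfl⟩, rfl⟩
      exact ⟨vfun n k p q, ⟨p, q, hpq, rfl⟩, (hPhi p q).symm⟩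
    · rintro ⟨v, ⟨p, q, hpq, rfl⟩, rfl⟩
      exact ⟨restrict k (opE p q), ⟨p, q, hpq, rfl⟩, hPhi p q⟩
  rw [himg, Submodule.span_image]
  exact (LinearEquiv.finrank_eq (Submodule.equivMapOfInjective (Phi n k)
    (Phi_injective n k) _)).symm

end Aux


open Finset


section Comb
variable {n k : ℕ}

def FF (g : Fin n → Fin n → ℝ) (S : Finset (Fin n)) : ℝ := ∑ p ∈ S, ∑ q ∈ Sᶜ, g p q
def GG (g : Fin n → Fin n → ℝ) (S : Finset (Fin n)) : ℝ := ∑ p ∈ S, ∑ q ∈ S, g p q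
def rowS (g : Fin n → Fin n → ℝ) (p : Fin n) : ℝ := ∑ q, g p q

variable (g : Fin n → Fin n → ℝ)

lemma FF_eq (S : Finset (Fin n)) : FF g S = (∑ p ∈ S, rowS g p) - GG g S := by
  unfold FF GG rowS
  rw [← Finset.sum_sub_distrib]
  refine Finset.sum_congr rfl fun p _ => ?_
  rw [eq_sub_iff_add_eq]
  exact Finset.sum_compl_add_sum S (fun q => g p q)

lemma GG_insert (hsym : ∀ p q, g p q = g q p) (hdiag : ∀ p, g p p = 0)
    {T : Finset (Fin n)} {i : Fin n} (hi : i ∉ T) :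
    GG g (insert i T) = GG g T + 2 * ∑ t ∈ T, g i t := by
  unfold GG
  calc ∑ p ∈ insert i T, ∑ q ∈ insert i T, g p q
      = (g i i + ∑ q ∈ T, g i q) + ∑ p ∈ T, (g p i + ∑ q ∈ T, g p q) := by
        rw [Finset.sum_insert hi]
        congr 1
        · exact Finset.sum_insert hi
        · exact Finset.sum_congr rfl fun p _ => Finset.sum_insert hi
    _ = GG g T + 2 * ∑ t ∈ T, g i t := by
        rw [hdiag i, Finset.sum_add_distrib]
        have h2 : ∑ p ∈ T, g p i = ∑ p ∈ T, g i p := Finset.sum_congr rfl fun p _ => hsym p i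
        rw [h2]; unfold GG; ring

lemma FF_one (hsym : ∀ p q, g p q = g q p) (hdiag : ∀ p, g p p = 0)
    {T : Finset (Fin n)} {x : Fin n} (hx : x ∉ T) :
    FF g (insert x T) = rowS g x + (∑ p ∈ T, rowS g p) - (GG g T + 2 * ∑ t ∈ T, g x t) := by
  rw [FF_eq, Finset.sum_insert hx, GG_insert g hsym hdiag hx]

lemma FF_two (hsym : ∀ p q, g p q = g q p) (hdiag : ∀ p, g p p = 0)
    {T : Finset (Fin n)} {x y : Fin n} (hx : x ∉ T) (hy : y ∉ T) (hxy : x ≠ y) :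
    FF g (insert x (insert y T)) = rowS g x + rowS g y + (∑ p ∈ T, rowS g p)
      - (GG g T + 2 * ∑ t ∈ T, g y t + 2 * (g x y + ∑ t ∈ T, g x t)) := by
  have hx' : x ∉ insert y T := by simp [Finset.mem_insert, hxy, hx]
  rw [FF_eq, Finset.sum_insert hx', Finset.sum_insert hy,
    GG_insert g hsym hdiag hx', GG_insert g hsym hdiag hy, Finset.sum_insert hy]
  ring

variable (hsym : ∀ p q, g p q = g q p) (hdiag : ∀ p, g p p = 0)
  (hF : ∀ S : Finset (Fin n), S.card = k → FF g S = 0)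

include hsym hdiag hF

lemma stepA (hn : 4 ≤ n) (hk2 : 2 ≤ k) (hkn : k ≤ n - 2)
    {i j a b : Fin n} (hij : i ≠ j) (hai : a ≠ i) (haj : a ≠ j)
    (hbi : b ≠ i) (hbj : b ≠ j) (hab : a ≠ b) :
    g i a - g j a = g i b - g j b := by
  have hc4 : ({i,j,a,b} : Finset (Fin n)).card ≤ 4 := by
    have h1 := Finset.card_insert_le i ({j,a,b} : Finset (Fin n))
    have h2 := Finset.card_insert_le j ({a,b} : Finset (Fin n))
    have h3 := Finset.card_insert_le a ({b} : Finset (Fin n))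
    have h4 : ({b} : Finset (Fin n)).card = 1 := Finset.card_singleton b
    omega
  have hsd : (Finset.univ \ ({i,j,a,b} : Finset (Fin n))).card = n - ({i,j,a,b} : Finset (Fin n)).card := by
    rw [Finset.card_sdiff_of_subset (Finset.subset_univ _), Finset.card_univ, Fintype.card_fin]
  obtain ⟨T, hTsub, hTcard⟩ := Finset.exists_subset_card_eq
    (s := Finset.univ \ ({i,j,a,b} : Finset (Fin n))) (n := k - 2) (by omega)
  have hnm : ∀ x : Fin n, x ∈ ({i,j,a,b} : Finset (Fin n)) → x ∉ T := by
    intro x hx hxT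
    have := hTsub hxT
    rw [Finset.mem_sdiff] at this
    exact this.2 hx
  have hiT : i ∉ T := hnm i (by simp)
  have hjT : j ∉ T := hnm j (by simp)
  have haT : a ∉ T := hnm a (by simp)
  have hbT : b ∉ T := hnm b (by simp)
  have hcard : ∀ x y : Fin n, x ∉ T → y ∉ T → x ≠ y → (insert x (insert y T)).card = k := by
    intro x y hx hy hxy
    rw [Finset.card_insert_of_notMem (by simp [Finset.mem_insert, hxy, hx]),
      Finset.card_insert_of_notMem hy, hTcard]
    omega
  have h1 := hF (insert i (insert a T)) (hcard i a hiT haT (Ne.symm hai))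
  have h2 := hF (insert j (insert a T)) (hcard j a hjT haT (Ne.symm haj))
  have h3 := hF (insert i (insert b T)) (hcard i b hiT hbT (Ne.symm hbi))
  have h4 := hF (insert j (insert b T)) (hcard j b hjT hbT (Ne.symm hbj))
  rw [FF_two g hsym hdiag hiT haT (Ne.symm hai)] at h1
  rw [FF_two g hsym hdiag hjT haT (Ne.symm haj)] at h2
  rw [FF_two g hsym hdiag hiT hbT (Ne.symm hbi)] at h3
  rw [FF_two g hsym hdiag hjT hbT (Ne.symm hbj)] at h4
  linarith

lemma stepB (hn : 4 ≤ n) (hk2 : 2 ≤ k) (hkn : k ≤ n - 2)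
    {i j a : Fin n} (hij : i ≠ j) (hai : a ≠ i) (haj : a ≠ j) :
    ((n : ℝ) - 2 * k) * (g i a - g j a) = 0 := by
  set d := g i a - g j a with hd
  have hA : ∀ t : Fin n, t ≠ i → t ≠ j → g i t - g j t = d := by
    intro t hti htj
    by_cases hta : t = a
    · rw [hta]
    · exact stepA g hsym hdiag hF hn hk2 hkn hij hti htj hai haj hta
  obtain ⟨T, hTsub, hTcard⟩ := Finset.exists_subset_card_eq
    (s := Finset.univ \ ({i,j} : Finset (Fin n))) (n := k - 1) (by
      rw [Finset.card_sdiff_of_subset (Finset.subset_univ _), Finset.card_univ, Fintype.card_fin,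
        Finset.card_pair hij]
      omega)
  have hnm : ∀ x : Fin n, x ∈ ({i,j} : Finset (Fin n)) → x ∉ T := by
    intro x hx hxT
    have := hTsub hxT
    rw [Finset.mem_sdiff] at this
    exact this.2 hx
  have hiT : i ∉ T := hnm i (by simp)
  have hjT : j ∉ T := hnm j (by simp)
  have hck : ∀ x : Fin n, x ∉ T → (insert x T).card = k := by
    intro x hx; rw [Finset.card_insert_of_notMem hx, hTcard]; omega
  have h1 := hF (insert i T) (hck i hiT)
  have h2 := hF (insert j T) (hck j hjT)
  rw [FF_one g hsym hdiag hiT] at h1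
  rw [FF_one g hsym hdiag hjT] at h2
  have hTd : ∑ t ∈ T, g i t - ∑ t ∈ T, g j t = ((k : ℝ) - 1) * d := by
    rw [← Finset.sum_sub_distrib]
    have : ∀ t ∈ T, g i t - g j t = d := by
      intro t ht
      have hmem := hTsub ht
      rw [Finset.mem_sdiff, Finset.mem_insert, Finset.mem_singleton] at hmem
      push_neg at hmem
      exact hA t hmem.2.1 hmem.2.2
    rw [Finset.sum_congr rfl this, Finset.sum_const, hTcard, nsmul_eq_mul]
    have : ((k - 1 : ℕ) : ℝ) = (k : ℝ) - 1 := by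
      have : 1 ≤ k := by omega
      push_cast [Nat.cast_sub this]
      ring
    rw [this]
  have hrow : rowS g i - rowS g j = ((n : ℝ) - 2) * d := by
    unfold rowS
    rw [← Finset.sum_sub_distrib]
    have hsplit := Finset.sum_sdiff (f := fun q => g i q - g j q)
      (Finset.subset_univ ({i,j} : Finset (Fin n)))
    have hpair : ∑ q ∈ ({i,j} : Finset (Fin n)), (g i q - g j q) = 0 := by
      rw [Finset.sum_pair hij, hdiag i, hdiag j, hsym j i]
      ring
    have hrest : ∑ q ∈ Finset.univ \ ({i,j} : Finset (Fin n)), (g i q - g j q)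
        = ((n : ℝ) - 2) * d := by
      have hall : ∀ q ∈ Finset.univ \ ({i,j} : Finset (Fin n)), g i q - g j q = d := by
        intro q hq
        rw [Finset.mem_sdiff, Finset.mem_insert, Finset.mem_singleton] at hq
        push_neg at hq
        exact hA q hq.2.1 hq.2.2
      rw [Finset.sum_congr rfl hall, Finset.sum_const, nsmul_eq_mul,
        Finset.card_sdiff_of_subset (Finset.subset_univ _), Finset.card_univ, Fintype.card_fin,
        Finset.card_pair hij]
      have : ((n - 2 : ℕ) : ℝ) = (n : ℝ) - 2 := by
        have : 2 ≤ n := by omega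
        push_cast [Nat.cast_sub this]
        ring
      rw [this]
    linarith [hsplit]
  linear_combination h1 - h2 - hrow + 2 * hTd


lemma key_nondeg (hn : 4 ≤ n) (hk2 : 2 ≤ k) (hkn : k ≤ n - 2) (hne : 2 * k ≠ n) :
    ∀ p q, g p q = 0 := by
  have hcoef : ((n : ℝ) - 2 * k) ≠ 0 := by
    intro h
    apply hne
    have h2 : ((2 * k : ℕ) : ℝ) = (n : ℝ) := by push_cast; linarith
    exact_mod_cast h2
  have heq : ∀ i j a : Fin n, i ≠ j → a ≠ i → a ≠ j → g i a = g j a := by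
    intro i j a hij hai haj
    have h0 := stepB g hsym hdiag hF hn hk2 hkn hij hai haj
    rcases mul_eq_zero.mp h0 with h | h
    · exact absurd h hcoef
    · linarith
  have step : ∀ x y z : Fin n, x ≠ z → y ≠ z → g x z = g y z := by
    intro x y z hxz hyz
    by_cases hxy : x = y
    · rw [hxy]
    · exact heq x y z hxy (Ne.symm hxz) (Ne.symm hyz)
  have conn : ∀ p q r s : Fin n, p ≠ q → r ≠ s → g p q = g r s := by
    intro p q r s hpq hrs
    by_cases hqr : q = r
    · subst hqr
      obtain ⟨e, hep, heq', hes⟩ : ∃ e : Fin n, e ≠ p ∧ e ≠ q ∧ e ≠ s := by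
        have hne3 : (Finset.univ \ ({p,q,s} : Finset (Fin n))).Nonempty := by
          rw [← Finset.card_pos, Finset.card_sdiff_of_subset (Finset.subset_univ _), Finset.card_univ,
            Fintype.card_fin]
          have c1 := Finset.card_insert_le p ({q,s} : Finset (Fin n))
          have c2 := Finset.card_insert_le q ({s} : Finset (Fin n))
          have c3 : ({s} : Finset (Fin n)).card = 1 := Finset.card_singleton s
          omega
        obtain ⟨e, he⟩ := hne3
        rw [Finset.mem_sdiff, Finset.mem_insert, Finset.mem_insert, Finset.mem_singleton] at he
        push_neg at he
        exact ⟨e, he.2.1, he.2.2.1, he.2.2.2⟩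
      calc g p q = g e q := step p e q hpq heq'
        _ = g s q := step e s q heq' (Ne.symm hrs)
        _ = g q s := hsym s q
    · calc g p q = g r q := step p r q hpq (Ne.symm hqr)
        _ = g q r := hsym r q
        _ = g s r := step q s r hqr (Ne.symm hrs)
        _ = g r s := hsym s r
  obtain ⟨S₀, _, hS₀card⟩ := Finset.exists_subset_card_eq
    (s := (Finset.univ : Finset (Fin n))) (n := k)
    (by rw [Finset.card_univ, Fintype.card_fin]; omega)
  have hS0 : S₀.Nonempty := by rw [← Finset.card_pos, hS₀card]; omega
  have hS0c : S₀ᶜ.Nonempty := by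
    rw [← Finset.card_pos, Finset.card_compl, Fintype.card_fin, hS₀card]; omega
  obtain ⟨p₀, hp₀⟩ := hS0
  obtain ⟨q₀, hq₀⟩ := hS0c
  have hp0q0 : p₀ ≠ q₀ := by
    intro h; rw [h] at hp₀; exact (Finset.mem_compl.mp hq₀) hp₀
  set w := g p₀ q₀ with hw
  have hFF : FF g S₀ = ((k : ℝ) * ((n : ℝ) - k)) * w := by
    unfold FF
    have hinner : ∀ p ∈ S₀, ∑ q ∈ S₀ᶜ, g p q = ((n : ℝ) - k) * w := by
      intro p hp
      have : ∀ q ∈ S₀ᶜ, g p q = w := by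
        intro q hq
        exact conn p q p₀ q₀ (fun h => (Finset.mem_compl.mp hq) (h ▸ hp)) hp0q0
      rw [Finset.sum_congr rfl this, Finset.sum_const, nsmul_eq_mul, Finset.card_compl,
        Fintype.card_fin, hS₀card]
      have hkn' : k ≤ n := by omega
      push_cast [Nat.cast_sub hkn']
      ring
    rw [Finset.sum_congr rfl hinner, Finset.sum_const, nsmul_eq_mul, hS₀card]
    ring
  have hw0 : w = 0 := by
    have h0 := hF S₀ hS₀card
    rw [hFF] at h0
    have : ((k : ℝ) * ((n : ℝ) - k)) ≠ 0 := by
      apply mul_ne_zero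
      · exact_mod_cast (by omega : k ≠ 0)
      · intro h
        have : ((k : ℕ) : ℝ) = (n : ℝ) := by linarith
        have : k = n := by exact_mod_cast this
        omega
    exact (mul_eq_zero.mp h0).resolve_left this
  intro p q
  by_cases hpq : p = q
  · rw [hpq]; exact hdiag q
  · rw [conn p q p₀ q₀ hpq hp0q0, ← hw, hw0]

lemma key_half (hn : 4 ≤ n) (hk2 : 2 ≤ k) (heq2 : 2 * k = n) :
    ∃ u : Fin n → ℝ, (∑ j, u j = 0) ∧ ∀ p q, p ≠ q → g p q = u p + u q := by
  have hkn : k ≤ n - 2 := by omega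
  -- witness: for any three points there is a fourth
  have hwit : ∀ i j l : Fin n, ∃ a : Fin n, a ≠ i ∧ a ≠ j ∧ a ≠ l := by
    intro i j l
    have hne3 : (Finset.univ \ ({i,j,l} : Finset (Fin n))).Nonempty := by
      rw [← Finset.card_pos, Finset.card_sdiff_of_subset (Finset.subset_univ _), Finset.card_univ,
        Fintype.card_fin]
      have c1 := Finset.card_insert_le i ({j,l} : Finset (Fin n))
      have c2 := Finset.card_insert_le j ({l} : Finset (Fin n))
      have c3 : ({l} : Finset (Fin n)).card = 1 := Finset.card_singleton l
      omega
    obtain ⟨e, he⟩ := hne3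
    rw [Finset.mem_sdiff, Finset.mem_insert, Finset.mem_insert, Finset.mem_singleton] at he
    push_neg at he
    exact ⟨e, he.2.1, he.2.2.1, he.2.2.2⟩
  choose wit hw1 hw2 hw3 using hwit
  have hd : ∀ i j a b : Fin n, i ≠ j → a ≠ i → a ≠ j → b ≠ i → b ≠ j →
      g i a - g j a = g i b - g j b := by
    intro i j a b hij hai haj hbi hbj
    by_cases hab : a = b
    · rw [hab]
    · exact stepA g hsym hdiag hF hn hk2 hkn hij hai haj hbi hbj hab
  have hn0 : 0 < n := by omega
  set o : Fin n := ⟨0, hn0⟩ with ho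
  set τ : Fin n → ℝ := fun i => if i = o then 0 else
    g i (wit i i o) - g o (wit i i o) with hτ
  have hτo : τ o = 0 := by simp [hτ]
  have hτp : ∀ i a : Fin n, a ≠ i → a ≠ o → g i a - g o a = τ i := by
    intro i a hai hao
    by_cases hio : i = o
    · subst hio; simp [hτ]
    · have hwi := hw1 i i o
      have hwo := hw3 i i o
      have := hd i o a (wit i i o) hio hai hao hwi hwo
      rw [this, hτ]
      simp [hio]
  have hdτ : ∀ i j a : Fin n, i ≠ j → a ≠ i → a ≠ j → g i a - g j a = τ i - τ j := by
    intro i j a hij hai haj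
    by_cases hao : a = o
    · subst hao
      have hoi : o ≠ i := hai
      have hoj : o ≠ j := haj
      set e := wit i j o with he
      have hei := hw1 i j o
      have hej := hw2 i j o
      have heo := hw3 i j o
      have h1 := hd i j o e hij hoi hoj hei hej
      have h2 := hτp i e hei heo
      have h3 := hτp j e hej heo
      linarith
    · by_cases hio : i = o
      · subst hio
        have := hτp j a haj hao
        rw [hτo]
        linarith
      · by_cases hjo : j = o
        · subst hjo
          rw [hτo]
          have := hτp i a hai hao
          linarith
        · have h1 := hτp i a hai hao
          have h2 := hτp j a haj hao
          linarith
  set s : Fin n → ℝ := fun a => g (wit a a a) a - τ (wit a a a) with hs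
  have hsp : ∀ i a : Fin n, i ≠ a → g i a = τ i + s a := by
    intro i a hia
    set w := wit a a a with hww
    have hwa : w ≠ a := hw1 a a a
    have hsa : s a = g w a - τ w := by rw [hs]
    by_cases hiw : i = w
    · subst hiw; rw [hsa]; ring
    · have := hdτ i w a hiw (Ne.symm hia) (Ne.symm hwa)
      rw [hsa]
      linarith
  have hκ : ∀ i : Fin n, s i - τ i = s o - τ o := by
    intro i
    by_cases hio : i = o
    · rw [hio]
    · have h1 := hsp i o hio
      have h2 := hsp o i (Ne.symm hio)
      have h3 := hsym i o
      linarith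
  set κ := s o - τ o with hκdef
  refine ⟨fun i => τ i + κ / 2, ?_, ?_⟩
  · -- sum is zero
    obtain ⟨S₀, _, hS₀card⟩ := Finset.exists_subset_card_eq
      (s := (Finset.univ : Finset (Fin n))) (n := k)
      (by rw [Finset.card_univ, Fintype.card_fin]; omega)
    have hgu : ∀ p q : Fin n, p ≠ q → g p q = (τ p + κ / 2) + (τ q + κ / 2) := by
      intro p q hpq
      have h1 := hsp p q hpq
      have h2 := hκ q
      rw [hκdef] at h2
      linarith
    have h0 := hF S₀ hS₀card
    unfold FF at h0
    set u : Fin n → ℝ := fun i => τ i + κ / 2 with hu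
    have hcc : S₀ᶜ.card = k := by
      rw [Finset.card_compl, Fintype.card_fin, hS₀card]; omega
    have hre : ∑ p ∈ S₀, ∑ q ∈ S₀ᶜ, g p q
        = (k : ℝ) * (∑ p ∈ S₀, u p) + (k : ℝ) * (∑ q ∈ S₀ᶜ, u q) := by
      have hin : ∀ p ∈ S₀, ∑ q ∈ S₀ᶜ, g p q = (k : ℝ) * u p + ∑ q ∈ S₀ᶜ, u q := by
        intro p hp
        have : ∀ q ∈ S₀ᶜ, g p q = u p + u q := by
          intro q hq
          exact hgu p q (fun h => (Finset.mem_compl.mp hq) (h ▸ hp))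
        rw [Finset.sum_congr rfl this, Finset.sum_add_distrib, Finset.sum_const, hcc,
          nsmul_eq_mul]
      rw [Finset.sum_congr rfl hin, Finset.sum_add_distrib, ← Finset.mul_sum,
        Finset.sum_const, hS₀card, nsmul_eq_mul]
    rw [hre] at h0
    have hsum : ∑ p ∈ S₀, u p + ∑ q ∈ S₀ᶜ, u q = ∑ j, u j := Finset.sum_add_sum_compl S₀ u
    have hk0 : (k : ℝ) ≠ 0 := by exact_mod_cast (by omega : k ≠ 0)
    have : (k : ℝ) * (∑ j, u j) = 0 := by rw [← hsum]; ring_nf; ring_nf at h0; linarith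
    exact (mul_eq_zero.mp this).resolve_left hk0
  · intro p q hpq
    have h1 := hsp p q hpq
    have h2 := hκ q
    rw [hκdef] at h2
    linarith

end Comb


section Bridge
open Finset
variable {n k : ℕ}

/-- The set of 1-bits of a basis label. -/
def onesF {n : ℕ} (b : QState n) : Finset (Fin n) := Finset.univ.filter (fun i => b i = 1)

/-- The indicator basis label of a finite set. -/
def indQ {n : ℕ} (S : Finset (Fin n)) : QState n := fun i => if i ∈ S then 1 else 0

lemma wt_eq_card_onesF (b : QState n) : wt b = (onesF b).card := by
  unfold wt onesF
  rw [Finset.card_filter]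
  exact Finset.sum_congr rfl fun i _ => fin2_val (b i)

lemma onesF_indQ (S : Finset (Fin n)) : onesF (indQ S) = S := by
  ext i
  simp only [onesF, indQ, Finset.mem_filter, Finset.mem_univ, true_and]
  by_cases h : i ∈ S <;> simp [h]

lemma wt_indQ (S : Finset (Fin n)) : wt (indQ S) = S.card := by
  rw [wt_eq_card_onesF, onesF_indQ]

lemma indQ_onesF (b : QState n) : indQ (onesF b) = b := by
  funext i
  simp only [indQ, onesF, Finset.mem_filter, Finset.mem_univ, true_and]
  rcases fin2_eq_or (b i) with h | h <;> simp [h]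

lemma mem_onesF {b : QState n} {i : Fin n} : i ∈ onesF b ↔ b i = 1 := by
  simp [onesF]

/-- Basis labels of weight `k` are equinumerous with `k`-subsets. -/
def hwEquiv (n k : ℕ) : HWBasis n k ≃ {S : Finset (Fin n) // S.card = k} where
  toFun b := ⟨onesF b.1, by rw [← wt_eq_card_onesF, b.2]⟩
  invFun S := ⟨indQ S.1, by rw [wt_indQ, S.2]⟩
  left_inv b := Subtype.ext (indQ_onesF b.1)
  right_inv S := Subtype.ext (onesF_indQ S.1)

lemma card_hwBasis (n k : ℕ) : Fintype.card (HWBasis n k) = n.choose k := by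
  rw [Fintype.card_congr (hwEquiv n k), Fintype.card_finset_len, Fintype.card_fin]

end Bridge


section PairLayer
open Finset
variable {n k : ℕ}

/-- Ordered pairs `p < q` of qubit indices. -/
abbrev PairIdx (n : ℕ) := {x : Fin n × Fin n // x.1 < x.2}

/-- Symmetric extension of coefficients indexed by ordered pairs. -/
def ext2 {n : ℕ} (c : PairIdx n → ℝ) : Fin n → Fin n → ℝ := fun p q =>
  if h : p < q then c ⟨(p, q), h⟩ else if h' : q < p then c ⟨(q, p), h'⟩ else 0

lemma ext2_sym (c : PairIdx n → ℝ) : ∀ p q, ext2 c p q = ext2 c q p := by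
  intro p q
  unfold ext2
  rcases lt_trichotomy p q with h | h | h
  · rw [dif_pos h, dif_neg (not_lt_of_gt h), dif_pos h]
  · subst h
    rw [dif_neg (lt_irrefl p), dif_neg (lt_irrefl p)]
  · rw [dif_neg (not_lt_of_gt h), dif_pos h, dif_pos h]

lemma ext2_diag (c : PairIdx n → ℝ) : ∀ p, ext2 c p p = 0 := by
  intro p
  unfold ext2
  rw [dif_neg (lt_irrefl p), dif_neg (lt_irrefl p)]

lemma ext2_apply (c : PairIdx n → ℝ) (e : PairIdx n) : ext2 c e.1.1 e.1.2 = c e := by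
  unfold ext2
  rw [dif_pos e.2]

/-- Halving a symmetric double sum. -/
lemma sum_pairs (h : Fin n → Fin n → ℝ) (hsym : ∀ p q, h p q = h q p)
    (hdiag : ∀ p, h p p = 0) :
    ∑ p, ∑ q, h p q = 2 * ∑ e : PairIdx n, h e.1.1 e.1.2 := by
  have h0 : ∑ p, ∑ q, h p q = ∑ x ∈ univ ×ˢ univ, h x.1 x.2 := by
    rw [Finset.sum_product]
  have hsplit := Finset.sum_filter_add_sum_filter_not (univ ×ˢ univ)
    (fun x : Fin n × Fin n => x.1 < x.2) (fun x => h x.1 x.2)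
  have hsplit2 := Finset.sum_filter_add_sum_filter_not
    ((univ ×ˢ univ).filter (fun x : Fin n × Fin n => ¬ x.1 < x.2))
    (fun x : Fin n × Fin n => x.2 < x.1) (fun x => h x.1 x.2)
  have hdiag0 : ∑ x ∈ ((univ ×ˢ univ).filter (fun x : Fin n × Fin n => ¬ x.1 < x.2)).filter
      (fun x : Fin n × Fin n => ¬ x.2 < x.1), h x.1 x.2 = 0 := by
    apply Finset.sum_eq_zero
    intro x hx
    simp only [Finset.mem_filter] at hx
    have : x.1 = x.2 := le_antisymm (not_lt.mp hx.2) (not_lt.mp hx.1.2)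
    rw [this, hdiag]
  have hswap : ∑ x ∈ ((univ ×ˢ univ).filter (fun x : Fin n × Fin n => ¬ x.1 < x.2)).filter
      (fun x : Fin n × Fin n => x.2 < x.1), h x.1 x.2
      = ∑ x ∈ (univ ×ˢ univ).filter (fun x : Fin n × Fin n => x.1 < x.2), h x.1 x.2 := by
    apply Finset.sum_bij' (fun x _ => Prod.swap x) (fun x _ => Prod.swap x)
    · intro x hx
      simp only [Finset.mem_filter, Finset.mem_product, Finset.mem_univ] at hx ⊢
      exact ⟨⟨trivial, trivial⟩, hx.2⟩
    · intro x hx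
      simp only [Finset.mem_filter, Finset.mem_product, Finset.mem_univ] at hx ⊢
      exact ⟨⟨⟨trivial, trivial⟩, not_lt_of_gt hx.2⟩, hx.2⟩
    · intro x _; exact Prod.swap_swap x
    · intro x _; exact Prod.swap_swap x
    · intro x _; exact hsym x.1 x.2
  have hsub : ∑ x ∈ (univ ×ˢ univ).filter (fun x : Fin n × Fin n => x.1 < x.2), h x.1 x.2
      = ∑ e : PairIdx n, h e.1.1 e.1.2 := by
    apply Finset.sum_subtype
    intro x
    simp [Finset.mem_filter]
  rw [h0, ← hsplit, ← hsplit2, hdiag0, hswap, hsub]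
  ring

lemma card_pairIdx (n : ℕ) : 2 * Fintype.card (PairIdx n) = n * n - n := by
  have h := sum_pairs (n := n) (fun p q => if p = q then 0 else 1)
    (fun p q => by simp [eq_comm]) (fun p => by simp)
  have hL : ∑ p : Fin n, ∑ q : Fin n, (if p = q then (0 : ℝ) else 1) = n * n - n := by
    have hrow : ∀ p : Fin n, ∑ q : Fin n, (if p = q then (0 : ℝ) else 1) = (n : ℝ) - 1 := by
      intro p
      have : ∀ q : Fin n, (if p = q then (0 : ℝ) else 1) = 1 - (if p = q then 1 else 0) := by
        intro q; split <;> norm_num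
      rw [Finset.sum_congr rfl fun q _ => this q, Finset.sum_sub_distrib,
        Finset.sum_const, Finset.sum_ite_eq univ p (fun _ => (1 : ℝ)) ]
      simp
    rw [Finset.sum_congr rfl fun p _ => hrow p, Finset.sum_const]
    simp [mul_sub]
  have hR : ∑ e : PairIdx n, (if e.1.1 = e.1.2 then (0 : ℝ) else 1)
      = Fintype.card (PairIdx n) := by
    have : ∀ e : PairIdx n, (if e.1.1 = e.1.2 then (0 : ℝ) else 1) = 1 := by
      intro e
      rw [if_neg (ne_of_lt e.2)]
    rw [Finset.sum_congr rfl fun e _ => this e, Finset.sum_const, nsmul_eq_mul, mul_one,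
      Finset.card_univ]
  rw [hL, hR] at h
  have hle : n ≤ n * n := by
    rcases Nat.eq_zero_or_pos n with h0 | h0
    · simp [h0]
    · exact Nat.le_mul_of_pos_left n h0
  have h2 : ((2 * Fintype.card (PairIdx n) : ℕ) : ℝ) = ((n * n - n : ℕ) : ℝ) := by
    push_cast [Nat.cast_sub hle]
    linarith
  exact_mod_cast h2

end PairLayer


section LLayer
open Finset
variable {n k : ℕ}

/-- The linear map sending coefficients to the corresponding combination of
indicator vectors. -/
def Lmap (n k : ℕ) : (PairIdx n → ℝ) →ₗ[ℝ] (HWBasis n k → ℝ) where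
  toFun c := ∑ e : PairIdx n, c e • vfun n k e.1.1 e.1.2
  map_add' c d := by
    simp only [Pi.add_apply, add_smul]
    rw [Finset.sum_add_distrib]
  map_smul' r c := by
    simp only [RingHom.id_apply, Pi.smul_apply, smul_eq_mul, ← smul_smul]
    rw [← Finset.smul_sum]

lemma vfun_symm (p q : Fin n) : vfun n k p q = vfun n k q p := by
  funext b
  unfold vfun
  by_cases h : b.1 p = b.1 q
  · rw [if_pos h, if_pos h.symm]
  · rw [if_neg h, if_neg (fun hh => h hh.symm)]

lemma range_Lmap :
    LinearMap.range (Lmap n k) = Submodule.span ℝ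
      {v : HWBasis n k → ℝ | ∃ p q : Fin n, p ≠ q ∧ v = vfun n k p q} := by
  apply le_antisymm
  · rintro v ⟨c, rfl⟩
    apply Submodule.sum_mem
    intro e _
    apply Submodule.smul_mem
    exact Submodule.subset_span ⟨e.1.1, e.1.2, ne_of_lt e.2, rfl⟩
  · rw [Submodule.span_le]
    rintro v ⟨p, q, hpq, rfl⟩
    have key : ∀ (e₀ : PairIdx n), vfun n k e₀.1.1 e₀.1.2 ∈ LinearMap.range (Lmap n k) := by
      intro e₀
      refine ⟨(Pi.single e₀ (1:ℝ) : PairIdx n → ℝ), ?_⟩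
      show ∑ e : PairIdx n, (Pi.single e₀ (1:ℝ) : PairIdx n → ℝ) e • vfun n k e.1.1 e.1.2
        = vfun n k e₀.1.1 e₀.1.2
      rw [Finset.sum_eq_single e₀]
      · simp
      · intro e _ he
        rw [Pi.single_eq_of_ne he]
        simp
      · intro h; exact absurd (Finset.mem_univ e₀) h
    rcases lt_or_gt_of_ne hpq with h | h
    · exact key ⟨(p, q), h⟩
    · rw [vfun_symm]
      exact key ⟨(q, p), h⟩

lemma vfun_eq_indicator (p q : Fin n) (b : HWBasis n k) :
    vfun n k p q b = if (p ∈ onesF b.1 ↔ q ∈ onesF b.1) then 0 else 1 := by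
  unfold vfun
  simp only [mem_onesF]
  by_cases h : b.1 p = b.1 q
  · rw [if_pos h, if_pos (by rw [h])]
  · rw [if_neg h, if_neg]
    intro hiff
    exact h ((fin2_eq_iff (b.1 p) (b.1 q) 1).mpr hiff)

lemma Lmap_apply_FF (c : PairIdx n → ℝ) (b : HWBasis n k) :
    Lmap n k c b = FF (ext2 c) (onesF b.1) := by
  set S := onesF b.1 with hS
  set h : Fin n → Fin n → ℝ := fun p q =>
    ext2 c p q * (if (p ∈ S ↔ q ∈ S) then 0 else 1) with hh
  have hhsym : ∀ p q, h p q = h q p := by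
    intro p q
    rw [hh]
    simp only
    rw [ext2_sym]
    congr 1
    by_cases hp : p ∈ S <;> by_cases hq : q ∈ S <;> simp [hp, hq]
  have hhdiag : ∀ p, h p p = 0 := by
    intro p; rw [hh]; simp [ext2_diag]
  have hhalf := sum_pairs h hhsym hhdiag
  have hLhs : Lmap n k c b = ∑ e : PairIdx n, h e.1.1 e.1.2 := by
    show (∑ e : PairIdx n, c e • vfun n k e.1.1 e.1.2) b = _
    rw [Finset.sum_apply]
    refine Finset.sum_congr rfl fun e _ => ?_
    rw [Pi.smul_apply, smul_eq_mul, hh]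
    simp only
    rw [ext2_apply, vfun_eq_indicator]
  have hRhs : ∑ p, ∑ q, h p q = 2 * FF (ext2 c) S := by
    have hout : ∀ p : Fin n, ∑ q, h p q
        = (if p ∈ S then ∑ q ∈ Sᶜ, ext2 c p q else ∑ q ∈ S, ext2 c p q) := by
      intro p
      by_cases hp : p ∈ S
      · rw [if_pos hp]
        rw [← Finset.sum_compl_add_sum S (h p)]
        have h1 : ∑ q ∈ Sᶜ, h p q = ∑ q ∈ Sᶜ, ext2 c p q := by
          refine Finset.sum_congr rfl fun q hq => ?_
          rw [hh]
          simp only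
          rw [if_neg (by simp [hp, Finset.mem_compl.mp hq]), mul_one]
        have h2 : ∑ q ∈ S, h p q = 0 := by
          refine Finset.sum_eq_zero fun q hq => ?_
          rw [hh]
          simp only
          rw [if_pos (by simp [hp, hq]), mul_zero]
        rw [h1, h2, add_zero]
      · rw [if_neg hp]
        rw [← Finset.sum_compl_add_sum S (h p)]
        have h1 : ∑ q ∈ Sᶜ, h p q = 0 := by
          refine Finset.sum_eq_zero fun q hq => ?_
          rw [hh]
          simp only
          rw [if_pos (by simp [hp, Finset.mem_compl.mp hq]), mul_zero]
        have h2 : ∑ q ∈ S, h p q = ∑ q ∈ S, ext2 c p q := by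
          refine Finset.sum_congr rfl fun q hq => ?_
          rw [hh]
          simp only
          rw [if_neg (by simp [hp, hq]), mul_one]
        rw [h1, h2, zero_add]
    rw [Finset.sum_congr rfl fun p _ => hout p]
    have hsplit := Finset.sum_filter_add_sum_filter_not (univ : Finset (Fin n))
      (fun p => p ∈ S) (fun p => if p ∈ S then ∑ q ∈ Sᶜ, ext2 c p q else ∑ q ∈ S, ext2 c p q)
    have hfs : univ.filter (fun p => p ∈ S) = S := by ext p; simp
    have hfc : univ.filter (fun p => ¬ p ∈ S) = Sᶜ := by ext p; simp
    rw [hfs, hfc] at hsplit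
    have hA : ∑ p ∈ S, (if p ∈ S then ∑ q ∈ Sᶜ, ext2 c p q else ∑ q ∈ S, ext2 c p q)
        = FF (ext2 c) S := by
      refine Finset.sum_congr rfl fun p hp => ?_
      rw [if_pos hp]
    have hB : ∑ p ∈ Sᶜ, (if p ∈ S then ∑ q ∈ Sᶜ, ext2 c p q else ∑ q ∈ S, ext2 c p q)
        = FF (ext2 c) S := by
      have hcongr : ∀ p ∈ Sᶜ, (if p ∈ S then ∑ q ∈ Sᶜ, ext2 c p q else ∑ q ∈ S, ext2 c p q)
          = ∑ q ∈ S, ext2 c p q := fun p hp => if_neg (Finset.mem_compl.mp hp)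
      rw [Finset.sum_congr rfl hcongr, Finset.sum_comm]
      unfold FF
      exact Finset.sum_congr rfl fun q _ => Finset.sum_congr rfl fun p _ => ext2_sym c p q
    rw [← hsplit, hA, hB]
    ring
  have h2 : 2 * Lmap n k c b = 2 * FF (ext2 c) S := by
    rw [hLhs, ← hhalf, hRhs]
  linarith
end LLayer


section Cases
open Finset
variable {n k : ℕ}

lemma case1_span (hn : 3 ≤ n) (t : Fin 2)
    (hcard : ∀ b : HWBasis n k, (univ.filter (fun i => b.1 i = t)).card = 1) :
    Submodule.span ℝ {v : HWBasis n k → ℝ | ∃ p q : Fin n, p ≠ q ∧ v = vfun n k p q} = ⊤ := by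
  have hj : ∀ b : HWBasis n k, ∃ j : Fin n, ∀ i : Fin n, b.1 i = t ↔ i = j := by
    intro b
    obtain ⟨a, ha⟩ := Finset.card_eq_one.mp (hcard b)
    refine ⟨a, fun i => ?_⟩
    constructor
    · intro h
      have hmem : i ∈ univ.filter (fun i => b.1 i = t) := by simp [h]
      rw [ha] at hmem
      simpa using hmem
    · rintro rfl
      have hmem : i ∈ univ.filter (fun i' => b.1 i' = t) := by rw [ha]; simp
      simpa using hmem
  choose jf hjf using hj
  have jinj : ∀ b b' : HWBasis n k, jf b = jf b' → b = b' := by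
    intro b b' h
    apply Subtype.ext
    funext i
    apply (fin2_eq_iff _ _ t).mpr
    rw [hjf b i, hjf b' i, h]
  have hv : ∀ (p q : Fin n), p ≠ q → ∀ b : HWBasis n k,
      vfun n k p q b = if (p = jf b ∨ q = jf b) then 1 else 0 := by
    intro p q hpq b
    unfold vfun
    by_cases hp : p = jf b
    · have h1 : b.1 p = t := (hjf b p).mpr hp
      have h2 : b.1 q ≠ t := fun h => hpq (by rw [hp, ← (hjf b q).mp h])
      have hne : b.1 p ≠ b.1 q := fun h => h2 (h ▸ h1)
      rw [if_neg hne, if_pos (Or.inl hp)]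
    · by_cases hq : q = jf b
      · have h1 : b.1 q = t := (hjf b q).mpr hq
        have h2 : b.1 p ≠ t := fun h => hp ((hjf b p).mp h)
        have hne : b.1 p ≠ b.1 q := fun h => h2 (h.symm ▸ h1)
        rw [if_neg hne, if_pos (Or.inr hq)]
      · have h1 : b.1 p ≠ t := fun h => hp ((hjf b p).mp h)
        have h2 : b.1 q ≠ t := fun h => hq ((hjf b q).mp h)
        have heq : b.1 p = b.1 q := (fin2_eq_iff _ _ t).mpr (iff_of_false h1 h2)
        rw [if_pos heq, if_neg (by tauto)]
  have hsingle : ∀ x : HWBasis n k,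
      (fun bb => if x = bb then (1 : ℝ) else 0) ∈
        Submodule.span ℝ {v : HWBasis n k → ℝ | ∃ p q : Fin n, p ≠ q ∧ v = vfun n k p q} := by
    intro x
    set p := jf x with hpdef
    obtain ⟨q, r, hqr, hqp, hrp⟩ : ∃ q r : Fin n, q ≠ r ∧ q ≠ p ∧ r ≠ p := by
      have h2 : 1 < (univ.erase p).card := by
        rw [Finset.card_erase_of_mem (mem_univ p), card_univ, Fintype.card_fin]
        omega
      obtain ⟨q, r, hq, hr, hqr⟩ := Finset.one_lt_card_iff.mp h2
      exact ⟨q, r, hqr, Finset.ne_of_mem_erase hq, Finset.ne_of_mem_erase hr⟩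
    have key : (fun bb => if x = bb then (1 : ℝ) else 0)
        = (1/2 : ℝ) • (vfun n k p q + vfun n k p r - vfun n k q r) := by
      funext bb
      simp only [Pi.smul_apply, Pi.add_apply, Pi.sub_apply, smul_eq_mul]
      rw [hv p q (Ne.symm hqp) bb, hv p r (Ne.symm hrp) bb, hv q r hqr bb]
      by_cases hpb : p = jf bb
      · have hxb : x = bb := jinj x bb (hpdef ▸ hpb)
        have hqb : ¬ q = jf bb := fun h => hqp (h.trans hpb.symm)
        have hrb : ¬ r = jf bb := fun h => hrp (h.trans hpb.symm)
        rw [if_pos hxb, if_pos (Or.inl hpb), if_pos (Or.inl hpb),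
          if_neg (by tauto)]
        norm_num
      · have hxb : ¬ x = bb := fun h => hpb (by rw [← h])
        rw [if_neg hxb]
        by_cases hqb : q = jf bb
        · have hrb : ¬ r = jf bb := fun h => hqr (hqb.trans h.symm)
          rw [if_pos (Or.inr hqb), if_neg (by tauto), if_pos (Or.inl hqb)]
          norm_num
        · by_cases hrb : r = jf bb
          · rw [if_neg (by tauto), if_pos (Or.inr hrb), if_pos (Or.inr hrb)]
            norm_num
          · rw [if_neg (by tauto), if_neg (by tauto), if_neg (by tauto)]
            norm_num
    rw [key]
    apply Submodule.smul_mem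
    apply Submodule.sub_mem
    · apply Submodule.add_mem
      · exact Submodule.subset_span ⟨p, q, Ne.symm hqp, rfl⟩
      · exact Submodule.subset_span ⟨p, r, Ne.symm hrp, rfl⟩
    · exact Submodule.subset_span ⟨q, r, hqr, rfl⟩
  rw [eq_top_iff]
  intro f _
  rw [pi_eq_sum_univ f]
  apply Submodule.sum_mem
  intro x _
  exact Submodule.smul_mem _ _ (hsingle x)

lemma case2_dim (hn4 : 4 ≤ n) (hk2 : 2 ≤ k) (hkn : k ≤ n - 2) (hne : 2 * k ≠ n) :
    Module.finrank ℝ ↥(Submodule.span ℝ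
      {v : HWBasis n k → ℝ | ∃ p q : Fin n, p ≠ q ∧ v = vfun n k p q})
    = Fintype.card (PairIdx n) := by
  rw [← range_Lmap]
  have hker : LinearMap.ker (Lmap n k) = ⊥ := by
    apply (Submodule.eq_bot_iff _).mpr
    intro c hc
    have hc0 : Lmap n k c = 0 := LinearMap.mem_ker.mp hc
    have hF : ∀ S : Finset (Fin n), S.card = k → FF (ext2 c) S = 0 := by
      intro S hS
      have hb : wt (indQ S) = k := by rw [wt_indQ, hS]
      have h2 := congrFun hc0 ⟨indQ S, hb⟩
      rw [Lmap_apply_FF] at h2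
      rw [Pi.zero_apply] at h2
      have h3 : onesF (indQ S) = S := onesF_indQ S
      rwa [h3] at h2
    have hzero := key_nondeg (ext2 c) (ext2_sym c) (ext2_diag c) hF hn4 hk2 hkn hne
    funext e
    rw [← ext2_apply c e, hzero, Pi.zero_apply]
  have hrn := LinearMap.finrank_range_add_finrank_ker (Lmap n k)
  rw [hker, finrank_bot, Module.finrank_fintype_fun_eq_card] at hrn
  omega

/-- The map whose range is the kernel of `Lmap` in the half-filling case. -/
def Mmap (n : ℕ) : (Fin n → ℝ) →ₗ[ℝ] (PairIdx n → ℝ) where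
  toFun u := fun e => u e.1.1 + u e.1.2 - (2 / n) * ∑ j, u j
  map_add' u v := by
    funext e
    simp only [Pi.add_apply, Finset.sum_add_distrib]
    ring
  map_smul' r u := by
    funext e
    simp only [RingHom.id_apply, Pi.smul_apply, smul_eq_mul, ← Finset.mul_sum]
    ring

lemma ext2_Mmap (u : Fin n → ℝ) {p q : Fin n} (hpq : p ≠ q) :
    ext2 (Mmap n u) p q = u p + u q - (2 / n) * ∑ j, u j := by
  unfold ext2
  rcases lt_or_gt_of_ne hpq with h | h
  · rw [dif_pos h]
    rfl
  · rw [dif_neg (not_lt_of_gt h), dif_pos h]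
    show u q + u p - (2 / n) * ∑ j, u j = _
    ring

lemma ker_Lmap_eq (hn4 : 4 ≤ n) (hk2 : 2 ≤ k) (heq : 2 * k = n) :
    LinearMap.ker (Lmap n k) = LinearMap.range (Mmap n) := by
  have hnR : (n : ℝ) = 2 * k := by exact_mod_cast heq.symm
  have hkR : (k : ℝ) ≠ 0 := by
    have : k ≠ 0 := by omega
    exact_mod_cast this
  apply le_antisymm
  · intro c hc
    have hc0 : Lmap n k c = 0 := LinearMap.mem_ker.mp hc
    have hF : ∀ S : Finset (Fin n), S.card = k → FF (ext2 c) S = 0 := by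
      intro S hS
      have hb : wt (indQ S) = k := by rw [wt_indQ, hS]
      have h2 := congrFun hc0 ⟨indQ S, hb⟩
      rw [Lmap_apply_FF] at h2
      rw [Pi.zero_apply] at h2
      have h3 : onesF (indQ S) = S := onesF_indQ S
      rwa [h3] at h2
    obtain ⟨u, hU, hu⟩ := key_half (ext2 c) (ext2_sym c) (ext2_diag c) hF hn4 hk2 heq
    refine ⟨u, ?_⟩
    funext e
    show u e.1.1 + u e.1.2 - (2 / n) * ∑ j, u j = c e
    rw [hU, mul_zero, sub_zero, ← ext2_apply c e, hu e.1.1 e.1.2 (ne_of_lt e.2)]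
  · rintro c ⟨u, rfl⟩
    apply LinearMap.mem_ker.mpr
    funext b
    rw [Lmap_apply_FF, Pi.zero_apply]
    set S := onesF b.1 with hSdef
    have hcS : S.card = k := by rw [hSdef, ← wt_eq_card_onesF, b.2]
    have hcSc : Sᶜ.card = k := by
      rw [Finset.card_compl, Fintype.card_fin, hcS]; omega
    set C : ℝ := (2 / n) * ∑ j, u j with hC
    have hterm : ∀ p ∈ S, ∀ q ∈ Sᶜ, ext2 (Mmap n u) p q = u p + u q - C := by
      intro p hp q hq
      have hpq : p ≠ q := fun h => (Finset.mem_compl.mp hq) (h ▸ hp)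
      rw [ext2_Mmap u hpq]
    unfold FF
    have hin : ∀ p ∈ S, ∑ q ∈ Sᶜ, ext2 (Mmap n u) p q
        = (k : ℝ) * (u p - C) + ∑ q ∈ Sᶜ, u q := by
      intro p hp
      rw [Finset.sum_congr rfl (hterm p hp)]
      have : ∀ q : Fin n, u p + u q - C = (u p - C) + u q := fun q => by ring
      rw [Finset.sum_congr rfl fun q _ => this q, Finset.sum_add_distrib, Finset.sum_const,
        hcSc, nsmul_eq_mul]
    rw [Finset.sum_congr rfl hin, Finset.sum_add_distrib, Finset.sum_const, hcS,
      nsmul_eq_mul, ← Finset.mul_sum]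
    have hsplit : ∑ p ∈ S, u p + ∑ q ∈ Sᶜ, u q = ∑ j, u j :=
      Finset.sum_add_sum_compl S u
    have hCval : (k : ℝ) * C = ∑ j, u j := by
      rw [hC, hnR]
      field_simp
    set US := ∑ p ∈ S, u p
    set UC := ∑ q ∈ Sᶜ, u q
    rw [Finset.sum_sub_distrib, Finset.sum_const, hcS, nsmul_eq_mul]
    linear_combination (k : ℝ) * hsplit - (k : ℝ) * hCval

lemma ker_Mmap_eq (hn : 3 ≤ n) :
    LinearMap.ker (Mmap n) = Submodule.span ℝ {(fun _ => (1 : ℝ) : Fin n → ℝ)} := by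
  have hn0 : 0 < n := by omega
  apply le_antisymm
  · intro u hu
    have hu0 : Mmap n u = 0 := LinearMap.mem_ker.mp hu
    have hpair : ∀ p q : Fin n, p ≠ q → u p + u q = (2 / n) * ∑ j, u j := by
      intro p q hpq
      rcases lt_or_gt_of_ne hpq with h | h
      · have h2 := congrFun hu0 ⟨(p, q), h⟩
        have h3 : u p + u q - (2 / n) * ∑ j, u j = 0 := h2
        linarith
      · have h2 := congrFun hu0 ⟨(q, p), h⟩
        have h3 : u q + u p - (2 / n) * ∑ j, u j = 0 := h2
        linarith
    have hconst : ∀ i j : Fin n, u i = u j := by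
      intro i j
      by_cases hij : i = j
      · rw [hij]
      · obtain ⟨l, hli, hlj⟩ : ∃ l : Fin n, l ≠ i ∧ l ≠ j := by
          have hne3 : (Finset.univ \ ({i, j} : Finset (Fin n))).Nonempty := by
            rw [← Finset.card_pos, Finset.card_sdiff_of_subset (Finset.subset_univ _), Finset.card_univ,
              Fintype.card_fin, Finset.card_pair hij]
            omega
          obtain ⟨e, he⟩ := hne3
          rw [Finset.mem_sdiff, Finset.mem_insert, Finset.mem_singleton] at he
          push_neg at he
          exact ⟨e, he.2.1, he.2.2⟩
        have e1 := hpair i l (Ne.symm hli)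
        have e2 := hpair j l (Ne.symm hlj)
        linarith
    apply Submodule.mem_span_singleton.mpr
    refine ⟨u ⟨0, hn0⟩, ?_⟩
    funext i
    show u ⟨0, hn0⟩ * 1 = u i
    rw [mul_one, hconst ⟨0, hn0⟩ i]
  · rw [Submodule.span_le, Set.singleton_subset_iff]
    apply LinearMap.mem_ker.mpr
    funext e
    show (1 : ℝ) + 1 - (2 / n) * ∑ _j : Fin n, (1 : ℝ) = 0
    rw [Finset.sum_const, card_univ, Fintype.card_fin, nsmul_eq_mul, mul_one]
    have : (n : ℝ) ≠ 0 := by positivity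
    field_simp
    norm_num

lemma case3_dim (hn3 : 3 ≤ n) (hn4 : 4 ≤ n) (hk2 : 2 ≤ k) (heq : 2 * k = n) :
    Module.finrank ℝ ↥(Submodule.span ℝ
      {v : HWBasis n k → ℝ | ∃ p q : Fin n, p ≠ q ∧ v = vfun n k p q})
    = Fintype.card (PairIdx n) - (n - 1) := by
  rw [← range_Lmap]
  have hkerM : Module.finrank ℝ ↥(LinearMap.ker (Mmap n)) = 1 := by
    rw [ker_Mmap_eq hn3]
    apply finrank_span_singleton
    intro h
    have := congrFun h ⟨0, by omega⟩
    simp at this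
  have hrnM := LinearMap.finrank_range_add_finrank_ker (Mmap n)
  rw [hkerM, Module.finrank_fintype_fun_eq_card, Fintype.card_fin] at hrnM
  have hrnL := LinearMap.finrank_range_add_finrank_ker (Lmap n k)
  rw [ker_Lmap_eq hn4 hk2 heq, Module.finrank_fintype_fun_eq_card] at hrnL
  omega

end Cases

/-- The DLA generated by all `Ẽ_{pq}` (type IV): dimension `n` if `min(k,n−k)=1`,
`n(n−1)/2` if `1 < min(k,n−k) < n/2`, and `(n−1)(n−2)/2` if `k = n/2`. -/
theorem dla_E_dim (n k : ℕ) (hn : 3 ≤ n) (hk1 : 1 ≤ k) (hk2 : k ≤ n - 1) :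
    (min k (n - k) = 1 →
      dlaDim {M : Matrix (HWBasis n k) (HWBasis n k) ℂ |
          ∃ p q : Fin n, p ≠ q ∧ M = restrict k (opE p q)} = n) ∧
    (1 < min k (n - k) → 2 * k ≠ n →
      dlaDim {M : Matrix (HWBasis n k) (HWBasis n k) ℂ |
          ∃ p q : Fin n, p ≠ q ∧ M = restrict k (opE p q)} = n * (n - 1) / 2) ∧
    (2 * k = n →
      dlaDim {M : Matrix (HWBasis n k) (HWBasis n k) ℂ |
          ∃ p q : Fin n, p ≠ q ∧ M = restrict k (opE p q)} = (n - 1) * (n - 2) / 2) := by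
  have hred := dla_red n k
  have hcp := card_pairIdx n
  refine ⟨?_, ?_, ?_⟩
  · intro hmin
    rw [hred]
    have hk : k = 1 ∨ k = n - 1 := by omega
    rcases hk with hk | hk
    · subst hk
      have hcard1 : ∀ b : HWBasis n 1, (Finset.univ.filter (fun i => b.1 i = 1)).card = 1 :=
        fun b => (wt_eq_card_onesF b.1).symm.trans b.2
      rw [case1_span hn 1 hcard1, finrank_top, Module.finrank_fintype_fun_eq_card,
        card_hwBasis, Nat.choose_one_right]
    · subst hk
      have hcard0 : ∀ b : HWBasis n (n - 1),
          (Finset.univ.filter (fun i => b.1 i = 0)).card = 1 := by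
        intro b
        have h1 : (Finset.univ.filter (fun i => b.1 i = 1)).card = n - 1 :=
          (wt_eq_card_onesF b.1).symm.trans b.2
        have h2 := Finset.card_filter_add_card_filter_not
          (s := (Finset.univ : Finset (Fin n))) (p := fun i => b.1 i = 1)
        have h3 : Finset.univ.filter (fun i => ¬ b.1 i = 1)
            = Finset.univ.filter (fun i => b.1 i = 0) := by
          apply Finset.filter_congr
          intro i _
          rcases fin2_eq_or (b.1 i) with h | h <;> simp [h]
        rw [h3] at h2
        rw [Finset.card_univ, Fintype.card_fin] at h2
        omega
      rw [case1_span hn 0 hcard0, finrank_top, Module.finrank_fintype_fun_eq_card,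
        card_hwBasis]
      have hsym := Nat.choose_symm (by omega : 1 ≤ n)
      rw [Nat.choose_one_right] at hsym
      exact hsym
  · intro hmin hne
    have hk2 : 2 ≤ k := by omega
    have hkn : k ≤ n - 2 := by omega
    have hn4 : 4 ≤ n := by omega
    rw [hred, case2_dim hn4 hk2 hkn hne]
    have h2 : n * n - n = n * (n - 1) := by
      obtain ⟨a, rfl⟩ : ∃ a, n = a + 4 := ⟨n - 4, by omega⟩
      have e1 : a + 4 - 1 = a + 3 := by omega
      rw [e1]
      have e2 : (a + 4) * (a + 4) - (a + 4) = (a + 4) * (a + 3) := by ring_nf; omega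
      rw [e2]
    rw [h2] at hcp
    omega
  · intro heq
    have hn4 : 4 ≤ n := by omega
    have hk2 : 2 ≤ k := by omega
    rw [hred, case3_dim (by omega) hn4 hk2 heq]
    have h3 : n * n - n = (n - 1) * (n - 2) + 2 * (n - 1) := by
      obtain ⟨a, rfl⟩ : ∃ a, n = a + 4 := ⟨n - 4, by omega⟩
      have e1 : a + 4 - 1 = a + 3 := by omega
      have e2 : a + 4 - 2 = a + 2 := by omega
      rw [e1, e2]
      have e3 : (a + 4) * (a + 4) - (a + 4) = (a + 4) * (a + 3) := by ring_nf; omega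
      rw [e3]
      ring
    rw [h3] at hcp
    omega

end
end

section
/- Let n ≥ 3 and 1 ≤ k ≤ n−1, and set k' = min(k, n−k). The dynamical Lie algebra generated on the Hamming-weight-k subspace H_{n,k} by the generator set {Ẽ_{pq}, S̃_{pq} : p, q ∈ {0,…,n−1}, p ≠ q} has real dimension n if k' = 1, and n(n−1)/2 if k' > 1. -/
open Matrix Complex

noncomputable section

attribute [local instance] LieRing.ofAssociativeRing

namespace DlaES

/-! ### Matrix-side generalities -/

section MatrixSide
variable {ι : Type*} [Fintype ι] [DecidableEq ι]

def Dsub (ι : Type*) [Fintype ι] [DecidableEq ι] : Submodule ℝ (Matrix ι ι ℂ) where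
  carrier := {M | ∀ x y, x ≠ y → M x y = 0}
  add_mem' := by intro a b ha hb x y hxy; simp [Matrix.add_apply, ha x y hxy, hb x y hxy]
  zero_mem' := by intro x y _; rfl
  smul_mem' := by intro c M hM x y hxy; simp [Matrix.smul_apply, hM x y hxy]

lemma mul_comm_of_diag {M N : Matrix ι ι ℂ} (hM : M ∈ Dsub ι) (hN : N ∈ Dsub ι) :
    M * N = N * M := by
  ext x y
  by_cases hxy : x = y
  · subst hxy
    rw [Matrix.mul_apply, Matrix.mul_apply,
      Finset.sum_eq_single x (fun z _ hz => by rw [hM x z (Ne.symm hz), zero_mul])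
        (fun h => absurd (Finset.mem_univ x) h),
      Finset.sum_eq_single x (fun z _ hz => by rw [hN x z (Ne.symm hz), zero_mul])
        (fun h => absurd (Finset.mem_univ x) h), mul_comm]
  · rw [Matrix.mul_apply, Matrix.mul_apply, Finset.sum_eq_zero, Finset.sum_eq_zero]
    · intro z _
      by_cases hz : x = z
      · subst hz; rw [hM x y hxy, mul_zero]
      · rw [hN x z hz, zero_mul]
    · intro z _
      by_cases hz : x = z
      · subst hz; rw [hN x y hxy, mul_zero]
      · rw [hM x z hz, zero_mul]

lemma dla_toSubmodule_eq (G : Set (Matrix ι ι ℂ))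
    (hG : ((fun H => Complex.I • H) '' G) ⊆ (Dsub ι : Set (Matrix ι ι ℂ))) :
    (DLA G).toSubmodule = Submodule.span ℝ ((fun H => Complex.I • H) '' G) := by
  set S := (fun H => Complex.I • H) '' G with hS
  have hspan_le : Submodule.span ℝ S ≤ Dsub ι := Submodule.span_le.mpr hG
  let K : LieSubalgebra ℝ (Matrix ι ι ℂ) :=
    { toSubmodule := Submodule.span ℝ S
      lie_mem' := by
        intro x y hx hy
        have h0 : ⁅x, y⁆ = 0 := by
          rw [Ring.lie_def, mul_comm_of_diag (hspan_le hx) (hspan_le hy), sub_self]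
        show ⁅x, y⁆ ∈ Submodule.span ℝ S
        rw [h0]; exact zero_mem _ }
  have h1 : DLA G ≤ K := LieSubalgebra.lieSpan_le.mpr Submodule.subset_span
  ext x
  constructor
  · intro hx; exact h1 hx
  · intro hx; exact LieSubalgebra.submodule_span_le_lieSpan hx

lemma dlaDim_eq_finrank_span (G : Set (Matrix ι ι ℂ))
    (hG : ((fun H => Complex.I • H) '' G) ⊆ (Dsub ι : Set (Matrix ι ι ℂ))) :
    dlaDim G = Module.finrank ℝ
      ↥(Submodule.span ℝ ((fun H => Complex.I • H) '' G)) := by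
  have h := dla_toSubmodule_eq G hG
  have : dlaDim G = Module.finrank ℝ ↥((DLA G).toSubmodule) := rfl
  rw [this, h]

end MatrixSide

/-! ### The generators as diagonal matrices -/

lemma fin2 (v : Fin 2) : v = 0 ∨ v = 1 := by fin_cases v <;> simp

def br (v : Fin 2) : ℝ := if v = 0 then 0 else 1

lemma br_sq (v : Fin 2) : br v * br v = br v := by unfold br; split <;> norm_num

variable (n k : ℕ)

def fL (p : Fin n) : HWBasis n k → ℝ := fun b => br (b.1 p)
def fQ (p q : Fin n) : HWBasis n k → ℝ := fun b => br (b.1 p) * br (b.1 q)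
def fE (p q : Fin n) : HWBasis n k → ℝ :=
  fun b => br (b.1 p) + br (b.1 q) - 2 * br (b.1 p) * br (b.1 q)
def fS (p q : Fin n) : HWBasis n k → ℝ := fun b => br (b.1 q) - br (b.1 p)

def genT : Set (HWBasis n k → ℝ) :=
  {d | ∃ p q : Fin n, p ≠ q ∧ (d = fE n k p q ∨ d = fS n k p q)}

def toMat : (HWBasis n k → ℝ) →ₗ[ℝ] Matrix (HWBasis n k) (HWBasis n k) ℂ where
  toFun d := Matrix.diagonal fun x => (d x : ℂ) * Complex.I
  map_add' a b := by
    rw [Matrix.diagonal_add]; congr 1; funext x; push_cast [Pi.add_apply]; ring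
  map_smul' r d := by
    rw [RingHom.id_apply]
    ext x y
    by_cases h : x = y
    · subst h
      simp [Matrix.smul_apply, Matrix.diagonal_apply_eq, Complex.real_smul]
      push_cast; ring
    · simp [Matrix.smul_apply, Matrix.diagonal_apply_ne _ h]

lemma toMat_injective : Function.Injective (toMat n k) := by
  intro a b h
  funext x
  have h' : (toMat n k a) x x = (toMat n k b) x x := by rw [h]
  simp only [toMat, LinearMap.coe_mk, AddHom.coe_mk, Matrix.diagonal_apply_eq] at h'
  have := mul_right_cancel₀ Complex.I_ne_zero h'
  exact_mod_cast this

variable {n k}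

lemma pauliZ_diag (m : Fin n) :
    pauliZ m = Matrix.diagonal (fun b : QState n => if b m = 0 then 1 else -1) := rfl

lemma opE_diag (p q : Fin n) : opE p q = Matrix.diagonal (fun b : QState n =>
    (1/2 : ℂ) * (1 - (if b p = 0 then 1 else -1) * (if b q = 0 then 1 else -1))) := by
  rw [opE, pauliZ_diag, pauliZ_diag, Matrix.diagonal_mul_diagonal, ← Matrix.diagonal_one,
    Matrix.diagonal_sub, ← Matrix.diagonal_smul]
  rfl

lemma opS_diag (p q : Fin n) : opS p q = Matrix.diagonal (fun b : QState n =>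
    (1/2 : ℂ) * ((if b p = 0 then 1 else -1) - (if b q = 0 then 1 else -1))) := by
  rw [opS, pauliZ_diag, pauliZ_diag, Matrix.diagonal_sub, ← Matrix.diagonal_smul]
  rfl

lemma restrict_diagonal (d : QState n → ℂ) :
    restrict k (Matrix.diagonal d) = Matrix.diagonal (fun x : HWBasis n k => d x.1) := by
  ext x y
  by_cases h : x = y
  · subst h
    show Matrix.diagonal d x.1 x.1 = _
    rw [Matrix.diagonal_apply_eq, Matrix.diagonal_apply_eq]
  · rw [Matrix.diagonal_apply_ne _ h]
    show Matrix.diagonal d x.1 y.1 = 0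
    exact Matrix.diagonal_apply_ne _ (fun hc => h (Subtype.ext hc))

lemma smul_restrict_opE (p q : Fin n) :
    Complex.I • restrict k (opE p q) = toMat n k (fE n k p q) := by
  rw [opE_diag, restrict_diagonal]
  show Complex.I • Matrix.diagonal _ = Matrix.diagonal _
  ext x y
  by_cases h : x = y
  · subst h
    rw [Matrix.smul_apply, Matrix.diagonal_apply_eq, Matrix.diagonal_apply_eq]
    rcases fin2 (x.1 p) with h1 | h1 <;> rcases fin2 (x.1 q) with h2 | h2 <;>
      simp [fE, br, h1, h2, smul_eq_mul] <;> ring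
  · rw [Matrix.smul_apply, Matrix.diagonal_apply_ne _ h, Matrix.diagonal_apply_ne _ h, smul_zero]

lemma smul_restrict_opS (p q : Fin n) :
    Complex.I • restrict k (opS p q) = toMat n k (fS n k p q) := by
  rw [opS_diag, restrict_diagonal]
  show Complex.I • Matrix.diagonal _ = Matrix.diagonal _
  ext x y
  by_cases h : x = y
  · subst h
    rw [Matrix.smul_apply, Matrix.diagonal_apply_eq, Matrix.diagonal_apply_eq]
    rcases fin2 (x.1 p) with h1 | h1 <;> rcases fin2 (x.1 q) with h2 | h2 <;>
      simp [fS, br, h1, h2, smul_eq_mul] <;> ring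
  · rw [Matrix.smul_apply, Matrix.diagonal_apply_ne _ h, Matrix.diagonal_apply_ne _ h, smul_zero]

/-! ### The function space on the weight-k slice -/

section RealSide
variable {n k : ℕ}

lemma br_cast (v : Fin 2) : br v = ((v : ℕ) : ℝ) := by
  rcases fin2 v with h | h <;> simp [br, h]

lemma bit_le_one (v : Fin 2) : (v : ℕ) ≤ 1 := Nat.lt_succ_iff.mp v.isLt

lemma sum_br (b : HWBasis n k) : ∑ p, br (b.1 p) = (k : ℝ) := by
  simp_rw [br_cast]
  rw [← Nat.cast_sum]
  exact_mod_cast congrArg (Nat.cast (R := ℝ)) b.2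

lemma sum_br_erase (b : HWBasis n k) (p : Fin n) :
    ∑ q ∈ Finset.univ.erase p, br (b.1 q) = (k : ℝ) - br (b.1 p) := by
  have h := Finset.add_sum_erase Finset.univ (fun q => br (b.1 q)) (Finset.mem_univ p)
  have h2 := sum_br b
  linarith [h, h2]

def W (n k : ℕ) : Submodule ℝ (HWBasis n k → ℝ) := Submodule.span ℝ (genT n k)

lemma fE_mem {p q : Fin n} (h : p ≠ q) : fE n k p q ∈ W n k :=
  Submodule.subset_span ⟨p, q, h, Or.inl rfl⟩

lemma fS_mem {p q : Fin n} (h : p ≠ q) : fS n k p q ∈ W n k :=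
  Submodule.subset_span ⟨p, q, h, Or.inr rfl⟩

lemma card_erase_univ (p : Fin n) : (Finset.univ.erase p).card = n - 1 := by
  rw [Finset.card_erase_of_mem (Finset.mem_univ p), Finset.card_univ, Fintype.card_fin]

lemma cast_pred {m : ℕ} (hm : 1 ≤ m) : ((m - 1 : ℕ) : ℝ) = (m : ℝ) - 1 := by
  have := Nat.cast_sub (R := ℝ) hm
  simpa using this

lemma sum_fE_apply (hn : 1 ≤ n) (p : Fin n) (b : HWBasis n k) :
    ∑ q ∈ Finset.univ.erase p, fE n k p q b = ((n : ℝ) - 2 * k) * br (b.1 p) + k := by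
  unfold fE
  rw [Finset.sum_sub_distrib, Finset.sum_add_distrib, Finset.sum_const, ← Finset.mul_sum,
    sum_br_erase, card_erase_univ, nsmul_eq_mul, cast_pred hn]
  linear_combination (2 : ℝ) * br_sq (b.1 p)

lemma sum_fS_apply (hn : 1 ≤ n) (p : Fin n) (b : HWBasis n k) :
    ∑ q ∈ Finset.univ.erase p, fS n k p q b = (k : ℝ) - (n : ℝ) * br (b.1 p) := by
  unfold fS
  rw [Finset.sum_sub_distrib, sum_br_erase, Finset.sum_const, card_erase_univ,
    nsmul_eq_mul, cast_pred hn]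
  ring

lemma one_mem (hn : 3 ≤ n) (hk1 : 1 ≤ k) (hk2 : k ≤ n - 1) :
    (1 : HWBasis n k → ℝ) ∈ W n k := by
  have hn0 : (0 : ℕ) < n := by omega
  set p : Fin n := ⟨0, hn0⟩ with hp
  have hkn : k < n := by omega
  have hc : (2 * (k : ℝ) * ((n : ℝ) - k)) ≠ 0 := by
    have h1 : (1 : ℝ) ≤ (k : ℝ) := by exact_mod_cast hk1
    have h2 : (k : ℝ) < (n : ℝ) := by exact_mod_cast hkn
    have : (0 : ℝ) < 2 * (k : ℝ) * ((n : ℝ) - k) := by nlinarith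
    exact ne_of_gt this
  have key : (1 : HWBasis n k → ℝ) = (2 * (k : ℝ) * ((n : ℝ) - k))⁻¹ •
      ((n : ℝ) • (∑ q ∈ Finset.univ.erase p, fE n k p q) +
        ((n : ℝ) - 2 * k) • (∑ q ∈ Finset.univ.erase p, fS n k p q)) := by
    funext b
    simp only [Pi.one_apply, Pi.smul_apply, Pi.add_apply, Finset.sum_apply, smul_eq_mul]
    rw [sum_fE_apply (by omega) p b, sum_fS_apply (by omega) p b]
    field_simp [sub_ne_zero.mpr (show (n : ℝ) ≠ k by exact_mod_cast hkn.ne')]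
    ring
  rw [key]
  refine Submodule.smul_mem _ _ (Submodule.add_mem _ (Submodule.smul_mem _ _ ?_)
    (Submodule.smul_mem _ _ ?_))
  · exact Submodule.sum_mem _ fun q hq => fE_mem (Ne.symm (Finset.mem_erase.mp hq).1)
  · exact Submodule.sum_mem _ fun q hq => fS_mem (Ne.symm (Finset.mem_erase.mp hq).1)

lemma fL_mem (hn : 3 ≤ n) (hk1 : 1 ≤ k) (hk2 : k ≤ n - 1) (p : Fin n) :
    fL n k p ∈ W n k := by
  have hnR : (n : ℝ) ≠ 0 := Nat.cast_ne_zero.mpr (by omega)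
  have key : fL n k p = (n : ℝ)⁻¹ •
      ((k : ℝ) • (1 : HWBasis n k → ℝ) - ∑ q ∈ Finset.univ.erase p, fS n k p q) := by
    funext b
    simp only [Pi.smul_apply, Pi.sub_apply, Pi.one_apply, Finset.sum_apply, smul_eq_mul]
    rw [sum_fS_apply (by omega) p b]
    unfold fL
    field_simp
    ring
  rw [key]
  exact Submodule.smul_mem _ _ (Submodule.sub_mem _
    (Submodule.smul_mem _ _ (one_mem hn hk1 hk2))
    (Submodule.sum_mem _ fun q hq => fS_mem (Ne.symm (Finset.mem_erase.mp hq).1)))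

lemma fQ_mem (hn : 3 ≤ n) (hk1 : 1 ≤ k) (hk2 : k ≤ n - 1) {p q : Fin n} (hpq : p ≠ q) :
    fQ n k p q ∈ W n k := by
  have key : fQ n k p q = (1/2 : ℝ) • (fL n k p + fL n k q - fE n k p q) := by
    funext b
    simp only [Pi.smul_apply, Pi.add_apply, Pi.sub_apply, smul_eq_mul]
    unfold fQ fL fE
    ring
  rw [key]
  exact Submodule.smul_mem _ _ (Submodule.sub_mem _
    (Submodule.add_mem _ (fL_mem hn hk1 hk2 p) (fL_mem hn hk1 hk2 q)) (fE_mem hpq))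

/-! ### The case `k = 1` -/

lemma wt_one_eq_zero {b : QState n} (hb : wt b = 1) {p i : Fin n} (hp : b p = 1)
    (hi : i ≠ p) : b i = 0 := by
  by_contra h
  have h1 : b i = 1 := (fin2 (b i)).resolve_left h
  have hle := Finset.sum_le_sum_of_subset (f := fun j => ((b j : ℕ)))
    (Finset.subset_univ ({p, i} : Finset (Fin n)))
  rw [Finset.sum_pair (Ne.symm hi), hp, h1] at hle
  unfold wt at hb
  rw [hb] at hle
  norm_num at hle

lemma exists_one_pos (b : HWBasis n 1) : ∃ p, b.1 p = 1 := by
  by_contra h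
  push_neg at h
  have h0 : ∀ i, b.1 i = 0 := fun i => (fin2 _).resolve_right (h i)
  have hz : wt b.1 = 0 := by
    unfold wt
    exact Finset.sum_eq_zero fun i _ => by rw [h0 i]; rfl
  rw [b.2] at hz
  omega

def unitSt (n : ℕ) (p : Fin n) : HWBasis n 1 :=
  ⟨fun i => if i = p then 1 else 0, by
    unfold wt
    have h : ∀ i : Fin n, (((if i = p then (1 : Fin 2) else 0) : Fin 2) : ℕ)
        = if i = p then 1 else 0 := fun i => by split <;> rfl
    simp_rw [h]
    simp⟩

lemma unitSt_bijective (n : ℕ) : Function.Bijective (unitSt n) := by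
  constructor
  · intro p q h
    have h' := congrFun (congrArg Subtype.val h) p
    by_contra hne
    simp only [unitSt, if_pos rfl] at h'
    rw [if_neg hne] at h'
    exact one_ne_zero h'
  · intro b
    obtain ⟨p, hp⟩ := exists_one_pos b
    refine ⟨p, ?_⟩
    apply Subtype.ext
    funext i
    show (if i = p then 1 else 0) = b.1 i
    by_cases h : i = p
    · subst h; rw [if_pos rfl, hp]
    · rw [if_neg h]; exact (wt_one_eq_zero b.2 hp h).symm

lemma span_top_k1 (hn : 3 ≤ n) : W n 1 = ⊤ := by
  rw [eq_top_iff]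
  intro f _
  rw [pi_eq_sum_univ f]
  refine Submodule.sum_mem _ fun x _ => Submodule.smul_mem _ _ ?_
  obtain ⟨p, hp⟩ := exists_one_pos x
  have key : (fun j : HWBasis n 1 => if x = j then (1 : ℝ) else 0) = fL n 1 p := by
    funext b
    unfold fL
    by_cases h : x = b
    · subst h; rw [if_pos rfl]; simp [br, hp]
    · rw [if_neg h]
      have hb : b.1 p = 0 := by
        by_contra hc
        have hb1 : b.1 p = 1 := (fin2 _).resolve_left hc
        apply h
        apply Subtype.ext
        funext i
        by_cases hip : i = p
        · subst hip; rw [hp, hb1]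
        · rw [wt_one_eq_zero x.2 hp hip, wt_one_eq_zero b.2 hb1 hip]
      simp [br, hb]
  rw [key]
  exact fL_mem hn le_rfl (by omega) p

lemma finrank_W_k1 (hn : 3 ≤ n) : Module.finrank ℝ ↥(W n 1) = n := by
  rw [span_top_k1 hn, finrank_top, Module.finrank_pi]
  have h := Fintype.card_of_bijective (unitSt_bijective n)
  rw [← h, Fintype.card_fin]

end RealSide

/-! ### The case `k = n - 1` -/

section Kpred
variable {n : ℕ}

lemma wt_pred_eq_one (hn : 3 ≤ n) {b : QState n} (hb : wt b = n - 1) {p i : Fin n}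
    (hp : b p = 0) (hi : i ≠ p) : b i = 1 := by
  by_contra h
  have h0 : b i = 0 := (fin2 _).resolve_right h
  have hmem : i ∈ Finset.univ.erase p := Finset.mem_erase.mpr ⟨hi, Finset.mem_univ i⟩
  have h1 : ∑ j, (b j : ℕ) = ∑ j ∈ (Finset.univ.erase p).erase i, (b j : ℕ) := by
    rw [Finset.sum_erase (f := fun j => ((b j : ℕ))) _ (by simp [h0]),
      Finset.sum_erase (f := fun j => ((b j : ℕ))) _ (by simp [hp])]
  have hle : ∑ j ∈ (Finset.univ.erase p).erase i, (b j : ℕ)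
      ≤ ((Finset.univ.erase p).erase i).card := by
    calc ∑ j ∈ (Finset.univ.erase p).erase i, (b j : ℕ)
        ≤ ∑ _j ∈ (Finset.univ.erase p).erase i, 1 :=
          Finset.sum_le_sum fun j _ => bit_le_one _
      _ = ((Finset.univ.erase p).erase i).card := by
          rw [Finset.sum_const, smul_eq_mul, mul_one]
  have hcard : ((Finset.univ.erase p).erase i).card = n - 2 := by
    rw [Finset.card_erase_of_mem hmem, card_erase_univ]
    omega
  unfold wt at hb
  omega

lemma exists_zero_pos (hn : 3 ≤ n) (b : HWBasis n (n - 1)) : ∃ p, b.1 p = 0 := by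
  by_contra h
  push_neg at h
  have h1 : ∀ i, b.1 i = 1 := fun i => (fin2 _).resolve_left (h i)
  have hz : wt b.1 = n := by
    unfold wt
    rw [Finset.sum_congr rfl fun i _ => by rw [h1 i]]
    simp
  rw [b.2] at hz
  omega

def counitSt (n : ℕ) (p : Fin n) : HWBasis n (n - 1) :=
  ⟨fun i => if i = p then 0 else 1, by
    unfold wt
    have h : ∀ i : Fin n, (((if i = p then (0 : Fin 2) else 1) : Fin 2) : ℕ)
        = if i = p then 0 else 1 := fun i => by split <;> rfl
    simp_rw [h]
    rw [← Finset.add_sum_erase _ _ (Finset.mem_univ p), if_pos rfl,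
      Finset.sum_congr rfl (fun i hi => if_neg (Finset.mem_erase.mp hi).1),
      Finset.sum_const, smul_eq_mul, mul_one, card_erase_univ, zero_add]⟩

lemma counitSt_bijective (hn : 3 ≤ n) : Function.Bijective (counitSt n) := by
  constructor
  · intro p q h
    have h' := congrFun (congrArg Subtype.val h) p
    by_contra hne
    simp only [counitSt, if_pos rfl] at h'
    rw [if_neg hne] at h'
    exact one_ne_zero h'.symm
  · intro b
    obtain ⟨p, hp⟩ := exists_zero_pos hn b
    refine ⟨p, ?_⟩
    apply Subtype.ext
    funext i
    show (if i = p then 0 else 1) = b.1 i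
    by_cases h : i = p
    · subst h; rw [if_pos rfl, hp]
    · rw [if_neg h]; exact (wt_pred_eq_one hn b.2 hp h).symm

lemma span_top_kpred (hn : 3 ≤ n) : W n (n - 1) = ⊤ := by
  rw [eq_top_iff]
  intro f _
  rw [pi_eq_sum_univ f]
  refine Submodule.sum_mem _ fun x _ => Submodule.smul_mem _ _ ?_
  obtain ⟨p, hp⟩ := exists_zero_pos hn x
  have key : (fun j : HWBasis n (n - 1) => if x = j then (1 : ℝ) else 0)
      = (1 : HWBasis n (n - 1) → ℝ) - fL n (n - 1) p := by
    funext b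
    simp only [Pi.sub_apply, Pi.one_apply]
    unfold fL
    by_cases h : x = b
    · subst h; rw [if_pos rfl]; simp [br, hp]
    · rw [if_neg h]
      have hb : b.1 p = 1 := by
        by_contra hc
        have hb0 : b.1 p = 0 := (fin2 _).resolve_right hc
        apply h
        apply Subtype.ext
        funext i
        by_cases hip : i = p
        · subst hip; rw [hp, hb0]
        · rw [wt_pred_eq_one hn x.2 hp hip, wt_pred_eq_one hn b.2 hb0 hip]
      simp [br, hb]
  rw [key]
  exact Submodule.sub_mem _ (one_mem hn (by omega) (by omega))
    (fL_mem hn (by omega) (by omega) p)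

lemma finrank_W_kpred (hn : 3 ≤ n) : Module.finrank ℝ ↥(W n (n - 1)) = n := by
  rw [span_top_kpred hn, finrank_top, Module.finrank_pi]
  have h := Fintype.card_of_bijective (counitSt_bijective hn)
  rw [← h, Fintype.card_fin]

end Kpred

/-! ### The middle case: pairs and the quadratic family -/

section Middle
variable {n k : ℕ}

abbrev Pairs (n : ℕ) := {x : Fin n × Fin n // x.1 < x.2}

def Qfam (n k : ℕ) : Pairs n → (HWBasis n k → ℝ) := fun e => fQ n k e.1.1 e.1.2

def pairsEquiv (n : ℕ) : Pairs n ≃ (Σ j : Fin n, Fin j.1) where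
  toFun x := ⟨x.1.2, ⟨x.1.1.1, x.2⟩⟩
  invFun s := ⟨(⟨s.2.1, lt_trans s.2.2 s.1.2⟩, s.1), s.2.2⟩
  left_inv := by rintro ⟨⟨a, b⟩, h⟩; rfl
  right_inv := by rintro ⟨j, i⟩; rfl

lemma card_pairs (n : ℕ) : Fintype.card (Pairs n) = n * (n - 1) / 2 := by
  rw [Fintype.card_congr (pairsEquiv n), Fintype.card_sigma]
  simp only [Fintype.card_fin]
  rw [Fin.sum_univ_eq_sum_range (fun i => i) n, Finset.sum_range_id]

def spanQ (n k : ℕ) : Submodule ℝ (HWBasis n k → ℝ) :=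
  Submodule.span ℝ (Set.range (Qfam n k))

lemma fQ_symm (p q : Fin n) : fQ n k p q = fQ n k q p :=
  funext fun _ => mul_comm _ _

lemma fQ_mem_spanQ {p q : Fin n} (hpq : p ≠ q) : fQ n k p q ∈ spanQ n k := by
  rcases lt_or_gt_of_ne hpq with h | h
  · exact Submodule.subset_span ⟨⟨(p, q), h⟩, rfl⟩
  · rw [fQ_symm]; exact Submodule.subset_span ⟨⟨(q, p), h⟩, rfl⟩

lemma sum_fQ_apply (p : Fin n) (b : HWBasis n k) :
    ∑ q ∈ Finset.univ.erase p, fQ n k p q b = ((k : ℝ) - 1) * br (b.1 p) := by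
  unfold fQ
  rw [← Finset.mul_sum, sum_br_erase]
  linear_combination (-1 : ℝ) * br_sq (b.1 p)

lemma fL_mem_spanQ (hk : 2 ≤ k) (p : Fin n) : fL n k p ∈ spanQ n k := by
  have hkR : ((k : ℝ) - 1) ≠ 0 := by
    have h2 : (2 : ℝ) ≤ (k : ℝ) := by exact_mod_cast hk
    intro h; linarith
  have key : fL n k p = ((k : ℝ) - 1)⁻¹ • ∑ q ∈ Finset.univ.erase p, fQ n k p q := by
    funext b
    simp only [Pi.smul_apply, Finset.sum_apply, smul_eq_mul]
    rw [sum_fQ_apply p b]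
    unfold fL
    field_simp
  rw [key]
  exact Submodule.smul_mem _ _ (Submodule.sum_mem _
    fun q hq => fQ_mem_spanQ (Ne.symm (Finset.mem_erase.mp hq).1))

lemma W_eq_spanQ (hn : 3 ≤ n) (hk : 2 ≤ k) (hk2 : k ≤ n - 1) : W n k = spanQ n k := by
  apply le_antisymm
  · rw [W, Submodule.span_le]
    rintro f ⟨p, q, hpq, h | h⟩ <;> subst h
    · have key : fE n k p q = fL n k p + fL n k q - (2 : ℝ) • fQ n k p q := by
        funext b
        simp only [Pi.add_apply, Pi.sub_apply, Pi.smul_apply, smul_eq_mul]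
        unfold fE fL fQ
        ring
      show fE n k p q ∈ spanQ n k
      rw [key]
      exact Submodule.sub_mem _
        (Submodule.add_mem _ (fL_mem_spanQ hk p) (fL_mem_spanQ hk q))
        (Submodule.smul_mem _ _ (fQ_mem_spanQ hpq))
    · have key : fS n k p q = fL n k q - fL n k p := by
        funext b
        simp only [Pi.sub_apply]
        unfold fS fL
        ring
      show fS n k p q ∈ spanQ n k
      rw [key]
      exact Submodule.sub_mem _ (fL_mem_spanQ hk q) (fL_mem_spanQ hk p)
  · rw [spanQ, Submodule.span_le]
    rintro f ⟨e, rfl⟩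
    exact fQ_mem hn (by omega) hk2 (ne_of_lt e.2)

/-! ### The key combinatorial lemma -/

lemma double_sum_insert (c : Fin n → Fin n → ℝ) (hsymm : ∀ p q, c p q = c q p)
    (hdiag : ∀ p, c p p = 0) (S : Finset (Fin n)) (x : Fin n) (hx : x ∉ S) :
    ∑ p ∈ insert x S, ∑ q ∈ insert x S, c p q
      = (∑ p ∈ S, ∑ q ∈ S, c p q) + 2 * ∑ q ∈ S, c x q := by
  rw [Finset.sum_insert hx, Finset.sum_insert hx, hdiag,
    Finset.sum_congr rfl (fun p (_ : p ∈ S) => Finset.sum_insert hx),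
    Finset.sum_add_distrib, Finset.sum_congr rfl (fun p (_ : p ∈ S) => hsymm p x)]
  ring

lemma key_comb (hk : 2 ≤ k) (hkn : k + 2 ≤ n) (c : Fin n → Fin n → ℝ)
    (hsymm : ∀ p q, c p q = c q p) (hdiag : ∀ p, c p p = 0)
    (hF : ∀ A : Finset (Fin n), A.card = k → ∑ p ∈ A, ∑ q ∈ A, c p q = 0) :
    ∀ p q, c p q = 0 := by
  -- the swap identity
  have hswap : ∀ A : Finset (Fin n), A.card = k → ∀ r ∈ A, ∀ x, x ∉ A →
      ∑ q ∈ A.erase r, c r q = ∑ q ∈ A.erase r, c x q := by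
    intro A hA r hr x hx
    have hr' : r ∉ A.erase r := Finset.notMem_erase r A
    have hx' : x ∉ A.erase r := fun h => hx (Finset.mem_of_mem_erase h)
    have e1 := double_sum_insert c hsymm hdiag (A.erase r) r hr'
    rw [Finset.insert_erase hr] at e1
    have hBcard : (insert x (A.erase r)).card = k := by
      rw [Finset.card_insert_of_notMem hx', Finset.card_erase_of_mem hr, hA]
      omega
    have e2 := double_sum_insert c hsymm hdiag (A.erase r) x hx'
    have h1 := hF A hA
    have h2 := hF _ hBcard
    linarith
  -- existence of suitable k-sets
  have existsA : ∀ p q x y : Fin n, p ≠ q → x ≠ p → x ≠ q → y ≠ p → y ≠ q → x ≠ y →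
      ∃ A : Finset (Fin n), A.card = k ∧ p ∈ A ∧ q ∈ A ∧ x ∉ A ∧ y ∉ A := by
    intro p q x y hpq hxp hxq hyp hyq hxy
    set s := (((((Finset.univ : Finset (Fin n)).erase y).erase x).erase q).erase p) with hs
    have hx1 : x ∈ (Finset.univ : Finset (Fin n)).erase y :=
      Finset.mem_erase.mpr ⟨hxy, Finset.mem_univ x⟩
    have hq1 : q ∈ ((Finset.univ : Finset (Fin n)).erase y).erase x :=
      Finset.mem_erase.mpr ⟨Ne.symm hxq, Finset.mem_erase.mpr ⟨Ne.symm hyq, Finset.mem_univ q⟩⟩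
    have hp1 : p ∈ (((Finset.univ : Finset (Fin n)).erase y).erase x).erase q :=
      Finset.mem_erase.mpr ⟨hpq, Finset.mem_erase.mpr ⟨Ne.symm hxp,
        Finset.mem_erase.mpr ⟨Ne.symm hyp, Finset.mem_univ p⟩⟩⟩
    have hscard : s.card = n - 4 := by
      rw [hs, Finset.card_erase_of_mem hp1, Finset.card_erase_of_mem hq1,
        Finset.card_erase_of_mem hx1, Finset.card_erase_of_mem (Finset.mem_univ y),
        Finset.card_univ, Fintype.card_fin]
      omega
    obtain ⟨T, hTs, hTcard⟩ := Finset.exists_subset_card_eq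
      (show k - 2 ≤ s.card by omega)
    have hpT : p ∉ T := fun h => Finset.notMem_erase p _ (hTs h)
    have hqT : q ∉ T := fun h =>
      Finset.notMem_erase q _ (Finset.mem_of_mem_erase (hTs h))
    have hxT : x ∉ T := fun h => Finset.notMem_erase x _
      (Finset.mem_of_mem_erase (Finset.mem_of_mem_erase (hTs h)))
    have hyT : y ∉ T := fun h => Finset.notMem_erase y _
      (Finset.mem_of_mem_erase (Finset.mem_of_mem_erase (Finset.mem_of_mem_erase (hTs h))))
    have hqiT : q ∉ T := hqT
    refine ⟨insert p (insert q T), ?_, Finset.mem_insert_self _ _,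
      Finset.mem_insert_of_mem (Finset.mem_insert_self _ _), ?_, ?_⟩
    · have hpqT : p ∉ insert q T := by
        simp only [Finset.mem_insert]
        push_neg
        exact ⟨hpq, hpT⟩
      rw [Finset.card_insert_of_notMem hpqT, Finset.card_insert_of_notMem hqT, hTcard]
      omega
    · simp only [Finset.mem_insert]
      push_neg
      exact ⟨hxp, hxq, hxT⟩
    · simp only [Finset.mem_insert]
      push_neg
      exact ⟨hyp, hyq, hyT⟩
  -- the four-point relation
  have hR : ∀ p q x y : Fin n, p ≠ q → x ≠ p → x ≠ q → y ≠ p → y ≠ q → x ≠ y →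
      c p q - c p y = c x q - c x y := by
    intro p q x y hpq hxp hxq hyp hyq hxy
    obtain ⟨A, hA, hpA, hqA, hxA, hyA⟩ := existsA p q x y hpq hxp hxq hyp hyq hxy
    have h1 := hswap A hA p hpA x hxA
    have hyq' : y ∉ A.erase q := fun h => hyA (Finset.mem_of_mem_erase h)
    have hA'card : (insert y (A.erase q)).card = k := by
      rw [Finset.card_insert_of_notMem hyq', Finset.card_erase_of_mem hqA, hA]
      omega
    have hpA' : p ∈ insert y (A.erase q) :=
      Finset.mem_insert_of_mem (Finset.mem_erase.mpr ⟨hpq, hpA⟩)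
    have hxA' : x ∉ insert y (A.erase q) := by
      intro h
      rcases Finset.mem_insert.mp h with h | h
      · exact hxy h
      · exact hxA (Finset.mem_of_mem_erase h)
    have h2 := hswap _ hA'card p hpA' x hxA'
    have hqS : q ∈ A.erase p := Finset.mem_erase.mpr ⟨Ne.symm hpq, hqA⟩
    have hqS' : q ∉ (A.erase p).erase q := Finset.notMem_erase q _
    have hyS : y ∉ (A.erase p).erase q := fun h =>
      hyA (Finset.mem_of_mem_erase (Finset.mem_of_mem_erase h))
    have e1 : A.erase p = insert q ((A.erase p).erase q) := (Finset.insert_erase hqS).symm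
    have e2 : (insert y (A.erase q)).erase p = insert y ((A.erase p).erase q) := by
      rw [Finset.erase_insert_of_ne hyp, Finset.erase_right_comm]
    rw [e1, Finset.sum_insert hqS', Finset.sum_insert hqS'] at h1
    rw [e2, Finset.sum_insert hyS, Finset.sum_insert hyS] at h2
    linarith
  -- equality when changing the first index
  have hEq : ∀ p x q : Fin n, p ≠ x → q ≠ p → q ≠ x → c p q = c x q := by
    intro p x q hpx hqp hqx
    have hn4 : 4 ≤ n := by omega
    have hymem : (0 : ℕ) <
        (((((Finset.univ : Finset (Fin n)).erase p).erase q).erase x)).card := by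
      have hq1 : q ∈ (Finset.univ : Finset (Fin n)).erase p :=
        Finset.mem_erase.mpr ⟨hqp, Finset.mem_univ q⟩
      have hx1 : x ∈ ((Finset.univ : Finset (Fin n)).erase p).erase q :=
        Finset.mem_erase.mpr ⟨Ne.symm hqx, Finset.mem_erase.mpr ⟨Ne.symm hpx, Finset.mem_univ x⟩⟩
      rw [Finset.card_erase_of_mem hx1, Finset.card_erase_of_mem hq1,
        Finset.card_erase_of_mem (Finset.mem_univ p), Finset.card_univ, Fintype.card_fin]
      omega
    obtain ⟨y, hy⟩ := Finset.card_pos.mp hymem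
    have hyx : y ≠ x := (Finset.mem_erase.mp hy).1
    have hyq : y ≠ q := (Finset.mem_erase.mp (Finset.mem_of_mem_erase hy)).1
    have hyp : y ≠ p :=
      (Finset.mem_erase.mp (Finset.mem_of_mem_erase (Finset.mem_of_mem_erase hy))).1
    obtain ⟨A, hA, hpA, hqA, hxA, hyA⟩ :=
      existsA p q x y (Ne.symm hqp) (Ne.symm hpx) (Ne.symm hqx) hyp hyq (Ne.symm hyx)
    have h1 := hswap A hA p hpA x hxA
    have hsummand : ∀ q' ∈ A.erase p, c p q' - c x q' = c p q - c x q := by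
      intro q' hq'
      rcases eq_or_ne q' q with rfl | hne
      · rfl
      · have hq'p : q' ≠ p := (Finset.mem_erase.mp hq').1
        have hq'A : q' ∈ A := Finset.mem_of_mem_erase hq'
        have hq'x : q' ≠ x := fun h => hxA (h ▸ hq'A)
        have hrel := hR p q' x q (Ne.symm hq'p) (Ne.symm hpx) (Ne.symm hq'x)
          hqp (Ne.symm hne) (Ne.symm hqx)
        linarith
    have hz : ∑ q' ∈ A.erase p, (c p q' - c x q') = 0 := by
      rw [Finset.sum_sub_distrib, h1, sub_self]
    have hconst : ∑ q' ∈ A.erase p, (c p q' - c x q')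
        = ((A.erase p).card : ℝ) * (c p q - c x q) := by
      rw [Finset.sum_congr rfl hsummand, Finset.sum_const, nsmul_eq_mul]
    have hcard : (A.erase p).card = k - 1 := by
      rw [Finset.card_erase_of_mem hpA, hA]
    have hcast : ((A.erase p).card : ℝ) ≠ 0 := by
      rw [hcard]
      exact_mod_cast (show ((k - 1 : ℕ) : ℝ) ≠ 0 by
        exact_mod_cast (show (k - 1 : ℕ) ≠ 0 by omega))
    have hmul : ((A.erase p).card : ℝ) * (c p q - c x q) = 0 := by rw [← hconst, hz]
    rcases mul_eq_zero.mp hmul with h | h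
    · exact absurd h hcast
    · linarith
  -- all off-diagonal entries are equal
  have hAll : ∀ p q r s : Fin n, p ≠ q → r ≠ s → c p q = c r s := by
    have step1 : ∀ a b a' : Fin n, a ≠ b → a' ≠ b → c a b = c a' b := by
      intro a b a' hab ha'b
      rcases eq_or_ne a a' with rfl | h
      · rfl
      · exact hEq a a' b h (Ne.symm hab) (Ne.symm ha'b)
    intro p q r s hpq hrs
    rcases eq_or_ne r q with rfl | hrq
    · calc c p r = c s r := step1 p r s hpq (Ne.symm hrs)
        _ = c r s := hsymm s r
    · calc c p q = c r q := step1 p q r hpq hrq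
        _ = c q r := hsymm r q
        _ = c s r := by
            rcases eq_or_ne q s with rfl | hqs
            · rfl
            · exact step1 q r s (Ne.symm hrq) (Ne.symm hrs)
        _ = c r s := hsymm s r
  -- conclude
  intro p q
  rcases eq_or_ne p q with rfl | hpq
  · exact hdiag p
  obtain ⟨A₀, hA₀sub, hA₀⟩ := Finset.exists_subset_card_eq
    (show k ≤ (Finset.univ : Finset (Fin n)).card by
      rw [Finset.card_univ, Fintype.card_fin]; omega)
  have h0 := hF A₀ hA₀
  have hinner : ∀ a ∈ A₀, ∑ q' ∈ A₀, c a q' = ((k : ℝ) - 1) * c p q := by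
    intro a ha
    rw [← Finset.add_sum_erase _ _ ha, hdiag, zero_add,
      Finset.sum_congr rfl (fun q' hq' =>
        hAll a q' p q (Ne.symm (Finset.mem_erase.mp hq').1) hpq),
      Finset.sum_const, Finset.card_erase_of_mem ha, hA₀, nsmul_eq_mul,
      cast_pred (show 1 ≤ k by omega)]
  rw [Finset.sum_congr rfl hinner, Finset.sum_const, hA₀, nsmul_eq_mul] at h0
  have hkR : (2 : ℝ) ≤ (k : ℝ) := by exact_mod_cast hk
  rcases mul_eq_zero.mp h0 with h | h
  · exfalso; linarith
  · rcases mul_eq_zero.mp h with h' | h'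
    · exfalso; linarith
    · exact h'

end Middle

/-! ### Linear independence of the quadratic family -/

section LI
variable {n k : ℕ}

lemma Qfam_li (hk : 2 ≤ k) (hkn : k + 2 ≤ n) : LinearIndependent ℝ (Qfam n k) := by
  rw [Fintype.linearIndependent_iff]
  intro g hg
  classical
  set c : Fin n → Fin n → ℝ := fun p q =>
    if h : p < q then g ⟨(p, q), h⟩ else if h' : q < p then g ⟨(q, p), h'⟩ else 0 with hc
  have hcval : ∀ (x : Fin n × Fin n) (h : x.1 < x.2), c x.1 x.2 = g ⟨x, h⟩ := by
    intro x h
    rw [hc]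
    dsimp only
    rw [dif_pos h]
  have hsymm : ∀ p q, c p q = c q p := by
    intro p q
    rcases lt_trichotomy p q with h | h | h
    · rw [hc]; dsimp only; rw [dif_pos h, dif_neg (asymm h), dif_pos h]
    · subst h; rfl
    · rw [hc]; dsimp only; rw [dif_neg (asymm h), dif_pos h, dif_pos h]
  have hdiag : ∀ p, c p p = 0 := by
    intro p
    rw [hc]
    dsimp only
    rw [dif_neg (lt_irrefl p), dif_neg (lt_irrefl p)]
  have hF : ∀ A : Finset (Fin n), A.card = k → ∑ p ∈ A, ∑ q ∈ A, c p q = 0 := by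
    intro A hA
    have hwt : wt (fun i => if i ∈ A then (1 : Fin 2) else 0) = k := by
      unfold wt
      have h : ∀ i : Fin n, (((if i ∈ A then (1 : Fin 2) else 0) : Fin 2) : ℕ)
          = if i ∈ A then 1 else 0 := fun i => by split <;> rfl
      simp_rw [h]
      rw [Finset.sum_ite_mem, Finset.univ_inter, Finset.sum_const, smul_eq_mul, mul_one, hA]
    set bA : HWBasis n k := ⟨fun i => if i ∈ A then 1 else 0, hwt⟩ with hbA
    have happ := congrFun hg bA
    simp only [Finset.sum_apply, Pi.smul_apply, smul_eq_mul, Pi.zero_apply] at happ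
    have hQval : ∀ e : Pairs n, Qfam n k e bA
        = if e.1.1 ∈ A ∧ e.1.2 ∈ A then (1 : ℝ) else 0 := by
      intro e
      show br (bA.1 e.1.1) * br (bA.1 e.1.2) = _
      by_cases h1 : e.1.1 ∈ A <;> by_cases h2 : e.1.2 ∈ A <;>
        simp [hbA, br, h1, h2]
    rw [Finset.sum_congr rfl (fun e _ => by rw [hQval e, mul_ite, mul_one, mul_zero])] at happ
    have hsubty : ∑ x ∈ Finset.univ.filter (fun x : Fin n × Fin n => x.1 < x.2),
        (if x.1 ∈ A ∧ x.2 ∈ A then c x.1 x.2 else 0)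
        = ∑ e : Pairs n, (if e.1.1 ∈ A ∧ e.1.2 ∈ A then g e else 0) := by
      rw [Finset.sum_subtype (p := fun x : Fin n × Fin n => x.1 < x.2)
        (Finset.univ.filter fun x : Fin n × Fin n => x.1 < x.2)
        (fun x => by simp)
        (fun x : Fin n × Fin n => if x.1 ∈ A ∧ x.2 ∈ A then c x.1 x.2 else 0)]
      apply Finset.sum_congr rfl
      intro e _
      by_cases h : e.1.1 ∈ A ∧ e.1.2 ∈ A
      · rw [if_pos h, if_pos h, hcval e.1 e.2]
      · rw [if_neg h, if_neg h]
    have hfil : (Finset.univ.filter (fun x : Fin n × Fin n => x.1 < x.2)).filter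
        (fun x => x.1 ∈ A ∧ x.2 ∈ A) = (A ×ˢ A).filter (fun x => x.1 < x.2) := by
      ext x
      simp only [Finset.mem_filter, Finset.mem_univ, true_and, Finset.mem_product]
      tauto
    have hhalf : ∑ x ∈ (A ×ˢ A).filter (fun x : Fin n × Fin n => x.1 < x.2),
        c x.1 x.2 = 0 := by
      rw [← hfil, Finset.sum_filter, hsubty]
      exact happ
    have hswap2 : ∑ x ∈ (A ×ˢ A).filter (fun x : Fin n × Fin n => x.2 < x.1), c x.1 x.2
        = ∑ x ∈ (A ×ˢ A).filter (fun x : Fin n × Fin n => x.1 < x.2), c x.1 x.2 := by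
      refine Finset.sum_bij' (fun x _ => Prod.swap x) (fun x _ => Prod.swap x) ?_ ?_ ?_ ?_ ?_
      · intro a ha
        simp only [Finset.mem_filter, Finset.mem_product] at ha ⊢
        exact ⟨⟨ha.1.2, ha.1.1⟩, ha.2⟩
      · intro a ha
        simp only [Finset.mem_filter, Finset.mem_product] at ha ⊢
        exact ⟨⟨ha.1.2, ha.1.1⟩, ha.2⟩
      · intro a _; exact Prod.swap_swap a
      · intro a _; exact Prod.swap_swap a
      · intro a _; exact hsymm a.1 a.2
    have htri : ∑ x ∈ ((A ×ˢ A).filter (fun x : Fin n × Fin n => ¬ x.1 < x.2)).filter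
        (fun x => x.2 < x.1), c x.1 x.2
        = ∑ x ∈ (A ×ˢ A).filter (fun x : Fin n × Fin n => x.2 < x.1), c x.1 x.2 := by
      congr 1
      ext x
      simp only [Finset.mem_filter, Finset.mem_product]
      constructor
      · rintro ⟨⟨h1, _⟩, h3⟩; exact ⟨h1, h3⟩
      · rintro ⟨h1, h3⟩; exact ⟨⟨h1, asymm h3⟩, h3⟩
    have hdiag0 : ∑ x ∈ ((A ×ˢ A).filter (fun x : Fin n × Fin n => ¬ x.1 < x.2)).filter
        (fun x => ¬ x.2 < x.1), c x.1 x.2 = 0 := by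
      apply Finset.sum_eq_zero
      intro x hx
      simp only [Finset.mem_filter] at hx
      have hxx : x.1 = x.2 := le_antisymm (not_lt.mp hx.2) (not_lt.mp hx.1.2)
      rw [hxx]
      exact hdiag x.2
    have hsplit1 := Finset.sum_filter_add_sum_filter_not (A ×ˢ A)
      (fun x : Fin n × Fin n => x.1 < x.2) (fun x => c x.1 x.2)
    have hsplit2 := Finset.sum_filter_add_sum_filter_not
      ((A ×ˢ A).filter (fun x : Fin n × Fin n => ¬ x.1 < x.2))
      (fun x : Fin n × Fin n => x.2 < x.1) (fun x => c x.1 x.2)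
    rw [← Finset.sum_product']
    linarith [hsplit1, hsplit2, htri, hswap2, hdiag0, hhalf]
  have hc0 := key_comb hk hkn c hsymm hdiag hF
  intro e
  have h := hc0 e.1.1 e.1.2
  rw [hcval e.1 e.2] at h
  exact h

lemma finrank_W_middle (hn : 3 ≤ n) (hk : 2 ≤ k) (hkn : k + 2 ≤ n) :
    Module.finrank ℝ ↥(W n k) = n * (n - 1) / 2 := by
  rw [W_eq_spanQ hn hk (by omega), spanQ,
    finrank_span_eq_card (Qfam_li hk hkn), card_pairs]

end LI

end DlaES

/-- The DLA generated by all `Ẽ_{pq}` and `S̃_{pq}` (type VI): dimension `n` if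
`min(k,n−k) = 1`, and `n(n−1)/2` if `min(k,n−k) > 1`. -/
theorem dla_ES_dim (n k : ℕ) (hn : 3 ≤ n) (hk1 : 1 ≤ k) (hk2 : k ≤ n - 1) :
    (min k (n - k) = 1 →
      dlaDim {M : Matrix (HWBasis n k) (HWBasis n k) ℂ |
          ∃ p q : Fin n, p ≠ q ∧ (M = restrict k (opE p q) ∨ M = restrict k (opS p q))} = n) ∧
    (1 < min k (n - k) →
      dlaDim {M : Matrix (HWBasis n k) (HWBasis n k) ℂ |
          ∃ p q : Fin n, p ≠ q ∧ (M = restrict k (opE p q) ∨ M = restrict k (opS p q))} =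
        n * (n - 1) / 2) := by
  set G : Set (Matrix (HWBasis n k) (HWBasis n k) ℂ) :=
    {M : Matrix (HWBasis n k) (HWBasis n k) ℂ |
      ∃ p q : Fin n, p ≠ q ∧ (M = restrict k (opE p q) ∨ M = restrict k (opS p q))} with hG
  have himg : (fun H => Complex.I • H) '' G = ⇑(DlaES.toMat n k) '' DlaES.genT n k := by
    ext M
    constructor
    · rintro ⟨M', ⟨p, q, hpq, h | h⟩, rfl⟩
      · exact ⟨DlaES.fE n k p q, ⟨p, q, hpq, Or.inl rfl⟩,
          by rw [h]; exact (DlaES.smul_restrict_opE p q).symm⟩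
      · exact ⟨DlaES.fS n k p q, ⟨p, q, hpq, Or.inr rfl⟩,
          by rw [h]; exact (DlaES.smul_restrict_opS p q).symm⟩
    · rintro ⟨d, ⟨p, q, hpq, h | h⟩, rfl⟩ <;> subst h
      · exact ⟨restrict k (opE p q), ⟨p, q, hpq, Or.inl rfl⟩, DlaES.smul_restrict_opE p q⟩
      · exact ⟨restrict k (opS p q), ⟨p, q, hpq, Or.inr rfl⟩, DlaES.smul_restrict_opS p q⟩
  have hdiagsub : ((fun H => Complex.I • H) '' G)
      ⊆ (DlaES.Dsub (HWBasis n k) : Set (Matrix (HWBasis n k) (HWBasis n k) ℂ)) := by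
    rw [himg]
    rintro M ⟨d, _, rfl⟩
    intro x y hxy
    exact Matrix.diagonal_apply_ne
      (fun x : HWBasis n k => ((d x : ℝ) : ℂ) * Complex.I) hxy
  have hdim := DlaES.dlaDim_eq_finrank_span G hdiagsub
  rw [himg] at hdim
  have hmap : Submodule.span ℝ (⇑(DlaES.toMat n k) '' DlaES.genT n k)
      = Submodule.map (DlaES.toMat n k) (DlaES.W n k) := by
    rw [DlaES.W]
    exact (Submodule.map_span (DlaES.toMat n k) (DlaES.genT n k)).symm
  have hrank : Module.finrank ℝ ↥(Submodule.map (DlaES.toMat n k) (DlaES.W n k))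
      = Module.finrank ℝ ↥(DlaES.W n k) :=
    (LinearEquiv.finrank_eq
      (Submodule.equivMapOfInjective _ (DlaES.toMat_injective n k) _)).symm
  rw [hmap, hrank] at hdim
  constructor
  · intro hmin
    have hcase : k = 1 ∨ k = n - 1 := by omega
    rcases hcase with rfl | h
    · rw [hdim]; exact DlaES.finrank_W_k1 hn
    · subst h; rw [hdim]; exact DlaES.finrank_W_kpred hn
  · intro hmin
    have hk : 2 ≤ k := by omega
    have hkn : k + 2 ≤ n := by omega
    rw [hdim]
    exact DlaES.finrank_W_middle hn hk hkn

end
end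

section
/- In the n-qubit Hilbert space (ℂ²)^{⊗n}, for any pairwise distinct qubit indices i, j, k, the commutator identity [R_{ij} · Z_k, R_{jk}] = i · J_{ik} holds, where [A, B] = AB − BA. -/
open Matrix Complex

attribute [local instance 100] LieRing.ofAssociativeRing

noncomputable section

namespace Aux
variable {n : ℕ}

def mono (g : QState n → QState n) (c : QState n → ℂ) : QOp n :=
  Matrix.of fun b b' => if b = g b' then c b' else 0

lemma mono_mul (g g' : QState n → QState n) (c c' : QState n → ℂ) :
    mono g c * mono g' c' = mono (fun b => g (g' b)) (fun b => c (g' b) * c' b) := by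
  ext b b'
  simp only [mono, Matrix.mul_apply, Matrix.of_apply]
  rw [Finset.sum_eq_single (g' b')]
  · simp
  · intro x _ hx; simp [hx]
  · simp

lemma smul_mono (a : ℂ) (g : QState n → QState n) (c : QState n → ℂ) :
    a • mono g c = mono g (fun b => a * c b) := by
  ext b b'
  simp only [mono, Matrix.smul_apply, Matrix.of_apply, smul_eq_mul]
  split <;> simp

lemma mono_add (g : QState n → QState n) (c c' : QState n → ℂ) :
    mono g c + mono g c' = mono g (fun b => c b + c' b) := by
  ext b b'
  simp only [mono, Matrix.add_apply, Matrix.of_apply]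
  split <;> simp

lemma mono_sub (g : QState n → QState n) (c c' : QState n → ℂ) :
    mono g c - mono g c' = mono g (fun b => c b - c' b) := by
  ext b b'
  simp only [mono, Matrix.sub_apply, Matrix.of_apply]
  split <;> simp

lemma mono_ext {g g' : QState n → QState n} {c c' : QState n → ℂ}
    (hg : ∀ b, g b = g' b) (hc : ∀ b, c b = c' b) : mono g c = mono g' c' := by
  rw [funext hg, funext hc]

lemma flip_apply_self (m : Fin n) (b : QState n) : flipBit m b m = 1 - b m :=
  Function.update_self _ _ _

lemma flip_apply_ne {m m' : Fin n} (h : m' ≠ m) (b : QState n) :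
    flipBit m b m' = b m' := Function.update_of_ne h _ _

lemma flip_flip (m : Fin n) (b : QState n) : flipBit m (flipBit m b) = b := by
  funext p
  by_cases hp : p = m
  · subst hp
    rw [flip_apply_self, flip_apply_self]
    have h2 : ∀ x : Fin 2, 1 - (1 - x) = x := by decide
    exact h2 _
  · rw [flip_apply_ne hp, flip_apply_ne hp]

lemma flip_comm {m m' : Fin n} (h : m ≠ m') (b : QState n) :
    flipBit m (flipBit m' b) = flipBit m' (flipBit m b) := by
  funext p
  by_cases hp : p = m
  · subst hp
    rw [flip_apply_self, flip_apply_ne h, flip_apply_ne h, flip_apply_self]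
  · by_cases hp' : p = m'
    · subst hp'
      rw [flip_apply_ne hp, flip_apply_self, flip_apply_self, flip_apply_ne hp]
    · rw [flip_apply_ne hp, flip_apply_ne hp', flip_apply_ne hp', flip_apply_ne hp]

lemma pauliX_eq (m : Fin n) : pauliX m = mono (flipBit m) (fun _ => 1) := rfl

lemma pauliY_eq (m : Fin n) :
    pauliY m = mono (flipBit m) (fun b => if b m = 0 then Complex.I else -Complex.I) := rfl

lemma pauliZ_eq (m : Fin n) :
    pauliZ m = mono id (fun b => if b m = 0 then 1 else -1) := by
  ext b b'
  simp only [pauliZ, mono, Matrix.of_apply, id]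
  by_cases h : b = b'
  · subst h; simp
  · simp [h]

end Aux

open Aux in
/-- `[R_{ij}·Z_k, R_{jk}] = i·J_{ik}` for pairwise distinct qubits. -/
theorem comm_RZ_R {n : ℕ} (i j k : Fin n) (hij : i ≠ j) (hjk : j ≠ k) (hik : i ≠ k) :
    ⁅opR i j * pauliZ k, opR j k⁆ = Complex.I • opJ i k := by
  have hji := hij.symm
  have hkj := hjk.symm
  have hki := hik.symm
  rw [Ring.lie_def]
  simp only [opR, opJ, pauliX_eq, pauliY_eq, pauliZ_eq, mono_mul, mono_add, mono_sub,
    smul_mono]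

  ext b b'
  simp only [mono, Matrix.sub_apply, Matrix.of_apply, id_eq]
  simp only [flip_comm hki, flip_comm hkj, flip_comm hji, Aux.flip_flip, flip_apply_self,
    flip_apply_ne hij, flip_apply_ne hji, flip_apply_ne hjk, flip_apply_ne hkj,
    flip_apply_ne hik, flip_apply_ne hki]
  have fin2a : ∀ x : Fin 2, (1 - x = 0) ↔ ¬ (x = 0) := by decide
  by_cases hb : b = flipBit i (flipBit k b')
  · simp only [hb, if_true, fin2a]
    by_cases h1 : b' i = 0 <;> by_cases h2 : b' j = 0 <;> by_cases h3 : b' k = 0 <;>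
      simp only [h1, h2, h3, if_true, if_false, not_true, not_false_iff] <;>
      ring_nf <;> simp [Complex.I_sq] <;> ring
  · simp [hb]

end
end
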